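/- arXiv:1405.1130 — 9 statements merged into one kernel-verified Lean document; each statement's English description precedes it below -/
import Mathlib

section
/- Let X be a metric space, f : X → ℝ ∪ {+∞}, and x̄ ∈ X with f(x̄) = 0. Then the strict outer slope of f at x̄ is bounded above by the uniform strict slope of f at x̄: \overline{|∇f|}^>(x̄) ≤ \overline{|∇f|}^◇(x̄). -/
open Filter Metric Topology ENNReal

/-- The "positive part" of an extended real, as an element of `ℝ≥0∞`. -/
noncomputable def ePlus (a : EReal) : ℝ≥0∞ := if a = ⊤ then ⊤ else ENNReal.ofReal a.toReal

variable {X : Type*} [MetricSpace X]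

/-- The local slope `|∇f|(x) := limsup_{u→x, u≠x} [f(x) − f(u)]₊ / d(u,x)`,
with the convention `|∇f|(x) = +∞` when `f(x) = +∞`. -/
noncomputable def locSlope (f : X → EReal) (x : X) : ℝ≥0∞ :=
  if f x = ⊤ then ⊤ else
    Filter.limsup (fun u => ePlus (f x - f u) / ENNReal.ofReal (dist u x)) (𝓝[≠] x)

/-- The nonlocal slope `|∇f|^◇(x) := sup_{u≠x} [f(x) − f₊(u)]₊ / d(u,x)`. -/
noncomputable def nlSlope (f : X → EReal) (x : X) : ℝ≥0∞ :=
  ⨆ (u : X) (_ : u ≠ x), ePlus (f x - max (f u) 0) / ENNReal.ofReal (dist u x)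

/-- The strict outer slope `\overline{|∇f|}^>(x̄) := liminf_{x→x̄, f(x)↓0} |∇f|(x)`,
realized as the limit (= supremum) as `ρ↓0` of the infimum of `|∇f|(x)` over all `x` with
`d(x,x̄) < ρ` and `0 < f(x) < ρ` (infimum of the empty set is `+∞`). -/
noncomputable def strictOuterSlope (f : X → EReal) (x₀ : X) : ℝ≥0∞ :=
  ⨆ (ρ : ℝ) (_ : 0 < ρ),
    ⨅ (x : X) (_ : dist x x₀ < ρ ∧ 0 < f x ∧ f x < (ρ : EReal)), locSlope f x

/-- The uniform strict slope `\overline{|∇f|}^◇(x̄) := liminf_{x→x̄, f(x)↓0} |∇f|^◇(x)`. -/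
noncomputable def uStrictSlope (f : X → EReal) (x₀ : X) : ℝ≥0∞ :=
  ⨆ (ρ : ℝ) (_ : 0 < ρ),
    ⨅ (x : X) (_ : dist x x₀ < ρ ∧ 0 < f x ∧ f x < (ρ : EReal)), nlSlope f x

lemma locSlope_le_nlSlope (f : X → EReal) (x : X) (h0 : 0 < f x) (htop : f x ≠ ⊤) :
    locSlope f x ≤ nlSlope f x := by
  have hbotx : f x ≠ ⊥ := fun h => by simp [h] at h0
  obtain ⟨a, ha⟩ : ∃ a : ℝ, f x = (a : EReal) := ⟨(f x).toReal, (EReal.coe_toReal htop hbotx).symm⟩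
  have hapos : 0 < a := by rwa [ha, EReal.coe_pos] at h0
  rw [locSlope, if_neg htop]
  by_cases hA : ∃ᶠ u in 𝓝[≠] x, f u < 0
  · -- the nonlocal slope is ⊤
    have hnl : nlSlope f x = ⊤ := by
      apply ENNReal.eq_top_of_forall_nnreal_le
      intro r
      set ε : ℝ := a / (r + 1) with hε
      have hεpos : 0 < ε := div_pos hapos (by positivity)
      obtain ⟨u, hu, hfu⟩ := (Metric.nhdsWithin_basis_ball.frequently_iff).mp hA ε hεpos
      have hux : u ≠ x := hu.2
      have hd : dist u x < ε := Metric.mem_ball.mp hu.1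
      have hdpos : 0 < dist u x := dist_pos.mpr hux
      have hnum : ePlus (f x - max (f u) 0) = ENNReal.ofReal a := by
        rw [max_eq_right hfu.le, sub_zero, ha, ePlus, if_neg (by simp), EReal.toReal_coe]
      have hstep : (r : ℝ≥0∞) ≤ ePlus (f x - max (f u) 0) / ENNReal.ofReal (dist u x) := by
        rw [hnum, ENNReal.le_div_iff_mul_le (Or.inl (by simp [hux]))
          (Or.inl ENNReal.ofReal_ne_top)]
        rw [← ENNReal.ofReal_coe_nnreal, ← ENNReal.ofReal_mul r.coe_nonneg]
        apply ENNReal.ofReal_le_ofReal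
        have h1 : (r : ℝ) * dist u x ≤ (r : ℝ) * ε := by
          exact mul_le_mul_of_nonneg_left hd.le r.coe_nonneg
        refine h1.trans ?_
        rw [hε, mul_div_assoc']
        rw [div_le_iff₀ (by positivity)]
        nlinarith [r.coe_nonneg, hapos]
      exact hstep.trans (le_iSup₂ (f := fun u (_ : u ≠ x) =>
        ePlus (f x - max (f u) 0) / ENNReal.ofReal (dist u x)) u hux)
    rw [hnl]; exact le_top
  · have hB : ∀ᶠ u in 𝓝[≠] x, 0 ≤ f u := by
      rw [Filter.not_frequently] at hA
      filter_upwards [hA] with u hu using not_lt.mp hu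
    refine Filter.limsup_le_of_le (by isBoundedDefault) ?_
    filter_upwards [hB, self_mem_nhdsWithin] with u hfu hux
    have heq : ePlus (f x - f u) / ENNReal.ofReal (dist u x)
        = ePlus (f x - max (f u) 0) / ENNReal.ofReal (dist u x) := by
      rw [max_eq_left hfu]
    rw [heq]
    exact le_iSup₂ (f := fun u (_ : u ≠ x) =>
      ePlus (f x - max (f u) 0) / ENNReal.ofReal (dist u x)) u hux

/-- `\overline{|∇f|}^>(x̄) ≤ \overline{|∇f|}^◇(x̄)`. -/
theorem strictOuterSlope_le_uStrictSlope (f : X → EReal) (x₀ : X)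
    (hbot : ∀ u, f u ≠ ⊥) (hx₀ : f x₀ = 0) :
    strictOuterSlope f x₀ ≤ uStrictSlope f x₀ := by
  rw [strictOuterSlope, uStrictSlope]
  refine iSup_mono fun ρ => iSup_mono fun hρ => iInf_mono fun x => iInf_mono fun hx => ?_
  exact locSlope_le_nlSlope f x hx.2.1 (ne_top_of_lt (hx.2.2.trans_le le_top))
end

section
/- Let X and Y be metric spaces, f : X×Y → ℝ ∪ {+∞} with f(x̄,ȳ) = 0 satisfying (P1) and (P2). Then Er f(x̄,ȳ) = liminf_{x→x̄, y→ȳ, f(x,y)>0} f(x,y)/d(x,S(f)) = liminf_{x→x̄, f(x,y)↓0} f(x,y)/d(x,S(f)), i.e. the three lower limits (over points (x,y) with f(x,y)>0 and x→x̄; over points with f(x,y)>0, x→x̄ and y→ȳ; and over points with x→x̄ and f(x,y) decreasing to 0) coincide. -/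
open Filter Metric Topology ENNReal

lemma ofReal_le_ePlus {a : EReal} (ha : a ≠ ⊥) {r : ℝ} (h : (r : EReal) ≤ a) :
    ENNReal.ofReal r ≤ ePlus a := by
  unfold ePlus
  split_ifs with htop
  · exact le_top
  · exact ENNReal.ofReal_le_ofReal (by
      have := EReal.toReal_le_toReal h (EReal.coe_ne_bot r) htop
      simpa using this)

lemma aux_sup (A : ℝ → ℝ≥0∞) (B m : ℝ≥0∞) (δ : ℝ) (hδ : 0 < δ) (hm : 0 < m)
    (h : ∀ δ' : ℝ, 0 < δ' → δ' ≤ δ → min B (m / ENNReal.ofReal δ') ≤ A δ') :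
    B ≤ ⨆ (δ' : ℝ) (_ : 0 < δ'), A δ' := by
  by_contra hB
  push_neg at hB
  obtain ⟨c, hLc, hcB⟩ := exists_between hB
  have hc_top : c ≠ ⊤ := (lt_of_lt_of_le hcB le_top).ne
  rcases eq_or_ne c 0 with rfl | hc0
  · simp at hLc
  · have hmc : (0 : ℝ≥0∞) < m / c := ENNReal.div_pos hm.ne' hc_top
    set r : ℝ≥0∞ := min 1 (m / c) with hr
    have hr0 : 0 < r := lt_min one_pos hmc
    have hrtop : r ≠ ⊤ := (lt_of_le_of_lt (min_le_left _ _) one_lt_top).ne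
    set t : ℝ := min δ r.toReal with ht
    have ht0 : 0 < t := lt_min hδ (ENNReal.toReal_pos hr0.ne' hrtop)
    have h1 : ENNReal.ofReal t ≤ m / c := by
      calc ENNReal.ofReal t ≤ ENNReal.ofReal r.toReal :=
            ENNReal.ofReal_le_ofReal (min_le_right _ _)
        _ = r := ENNReal.ofReal_toReal hrtop
        _ ≤ m / c := min_le_right _ _
    have h2 : c ≤ m / ENNReal.ofReal t := by
      rw [ENNReal.le_div_iff_mul_le (Or.inl (ENNReal.ofReal_pos.2 ht0).ne')
        (Or.inl ENNReal.ofReal_ne_top)]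
      calc c * ENNReal.ofReal t ≤ c * (m / c) := mul_le_mul_right h1 c
        _ ≤ m := ENNReal.mul_div_le
    have h3 : c ≤ A t := le_trans (le_min hcB.le h2) (h t ht0 (min_le_left _ _))
    have h4 : c ≤ ⨆ (δ' : ℝ) (_ : 0 < δ'), A δ' :=
      h3.trans (le_iSup₂ (f := fun δ' (_ : 0 < δ') => A δ') t ht0)
    exact absurd hLc (not_lt.2 h4)

variable {X Y : Type*} [MetricSpace X] [MetricSpace Y]

/-- for `f : X×Y → ℝ∪{+∞}` with `f(x̄,ȳ) = 0` satisfying (P1) and (P2), the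
error bound modulus `Er f(x̄,ȳ) = liminf_{x→x̄, f(x,y)>0} f(x,y)/d(x,S(f))` coincides with
`liminf_{x→x̄, y→ȳ, f(x,y)>0} f(x,y)/d(x,S(f))` and with
`liminf_{x→x̄, f(x,y)↓0} f(x,y)/d(x,S(f))`, each lower limit being realized as the limit
(= supremum) as `δ↓0` of the corresponding infimum (with `S(f) = {x : f(x,ȳ) ≤ 0}`). -/
theorem erMod_two_var_reprs (f : X × Y → EReal) (x₀ : X) (y₀ : Y)
    (hbot : ∀ p, f p ≠ ⊥) (hf₀ : f (x₀, y₀) = 0)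
    (hP1 : ∀ x : X, ∀ y : Y, y ≠ y₀ → 0 < f (x, y))
    (hP2 : 0 < ⨆ (δ : ℝ) (_ : 0 < δ),
        ⨅ (p : X × Y) (_ : 0 < f p ∧ f p < (δ : EReal)),
          ePlus (f p) / ENNReal.ofReal (dist p.2 y₀)) :
    (⨆ (δ : ℝ) (_ : 0 < δ),
        ⨅ (p : X × Y) (_ : dist p.1 x₀ < δ ∧ 0 < f p),
          ePlus (f p) / EMetric.infEdist p.1 {x | f (x, y₀) ≤ 0}) =
      (⨆ (δ : ℝ) (_ : 0 < δ),
        ⨅ (p : X × Y) (_ : dist p.1 x₀ < δ ∧ dist p.2 y₀ < δ ∧ 0 < f p),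
          ePlus (f p) / EMetric.infEdist p.1 {x | f (x, y₀) ≤ 0}) ∧
    (⨆ (δ : ℝ) (_ : 0 < δ),
        ⨅ (p : X × Y) (_ : dist p.1 x₀ < δ ∧ 0 < f p),
          ePlus (f p) / EMetric.infEdist p.1 {x | f (x, y₀) ≤ 0}) =
      (⨆ (δ : ℝ) (_ : 0 < δ),
        ⨅ (p : X × Y) (_ : dist p.1 x₀ < δ ∧ 0 < f p ∧ f p < (δ : EReal)),
          ePlus (f p) / EMetric.infEdist p.1 {x | f (x, y₀) ≤ 0}) := by
  set S : Set X := {x | f (x, y₀) ≤ 0} with hS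
  set g : X × Y → ℝ≥0∞ := fun p => ePlus (f p) / EMetric.infEdist p.1 S with hg
  have hx₀S : x₀ ∈ S := by simp [hS, hf₀]
  have hdist : ∀ (p : X × Y) (δ' : ℝ), dist p.1 x₀ < δ' →
      EMetric.infEdist p.1 S ≤ ENNReal.ofReal δ' := by
    intro p δ' hp
    calc EMetric.infEdist p.1 S ≤ edist p.1 x₀ := EMetric.infEdist_le_edist_of_mem hx₀S
      _ = ENNReal.ofReal (dist p.1 x₀) := edist_dist _ _
      _ ≤ ENNReal.ofReal δ' := ENNReal.ofReal_le_ofReal hp.le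
  set A : ℝ → ℝ≥0∞ := fun δ =>
    ⨅ (p : X × Y) (_ : dist p.1 x₀ < δ ∧ 0 < f p), g p with hA
  -- extract from hP2 a `δ₀` and positive lower bound
  rw [lt_iSup_iff] at hP2
  obtain ⟨δ₀, hP2⟩ := hP2
  rw [lt_iSup_iff] at hP2
  obtain ⟨hδ₀, hc⟩ := hP2
  set c : ℝ≥0∞ := ⨅ (p : X × Y) (_ : 0 < f p ∧ f p < (δ₀ : EReal)),
    ePlus (f p) / ENNReal.ofReal (dist p.2 y₀) with hcdef
  constructor
  · apply le_antisymm
    · refine iSup_mono fun δ => iSup_mono' fun hδ => ⟨hδ, ?_⟩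
      exact le_iInf₂ fun p hp => iInf₂_le p ⟨hp.1, hp.2.2⟩
    · refine iSup₂_le fun δ hδ => ?_
      set B : ℝ≥0∞ := ⨅ (p : X × Y) (_ : dist p.1 x₀ < δ ∧ dist p.2 y₀ < δ ∧ 0 < f p), g p
      set m : ℝ≥0∞ := min (ENNReal.ofReal δ₀) (c * ENNReal.ofReal δ) with hm
      have hm0 : 0 < m :=
        lt_min (ENNReal.ofReal_pos.2 hδ₀)
          (ENNReal.mul_pos hc.ne' (ENNReal.ofReal_pos.2 hδ).ne')
      refine aux_sup A B m δ hδ hm0 fun δ' h0' hle => ?_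
      refine le_iInf₂ fun p hp => ?_
      by_cases hy : dist p.2 y₀ < δ
      · exact le_trans (min_le_left _ _) (iInf₂_le p ⟨hp.1.trans_le hle, hy, hp.2⟩)
      · refine le_trans (min_le_right _ _) (ENNReal.div_le_div ?_ (hdist p δ' hp.1))
        push_neg at hy
        have hdy0 : (0:ℝ) < dist p.2 y₀ := lt_of_lt_of_le hδ hy
        by_cases hfp : f p < (δ₀ : EReal)
        · have h1 : c ≤ ePlus (f p) / ENNReal.ofReal (dist p.2 y₀) :=
            iInf₂_le p ⟨hp.2, hfp⟩
          have h2 : c * ENNReal.ofReal (dist p.2 y₀) ≤ ePlus (f p) := by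
            rw [← ENNReal.le_div_iff_mul_le (Or.inl (ENNReal.ofReal_pos.2 hdy0).ne')
              (Or.inl ENNReal.ofReal_ne_top)]
            exact h1
          calc m ≤ c * ENNReal.ofReal δ := min_le_right _ _
            _ ≤ c * ENNReal.ofReal (dist p.2 y₀) :=
                mul_le_mul_right (ENNReal.ofReal_le_ofReal hy) c
            _ ≤ ePlus (f p) := h2
        · push_neg at hfp
          exact le_trans (min_le_left _ _) (ofReal_le_ePlus (hbot p) hfp)
  · apply le_antisymm
    · refine iSup_mono fun δ => iSup_mono' fun hδ => ⟨hδ, ?_⟩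
      exact le_iInf₂ fun p hp => iInf₂_le p ⟨hp.1, hp.2.1⟩
    · refine iSup₂_le fun δ hδ => ?_
      set C : ℝ≥0∞ := ⨅ (p : X × Y) (_ : dist p.1 x₀ < δ ∧ 0 < f p ∧ f p < (δ : EReal)), g p
      refine aux_sup A C (ENNReal.ofReal δ) δ hδ (ENNReal.ofReal_pos.2 hδ) fun δ' h0' hle => ?_
      refine le_iInf₂ fun p hp => ?_
      by_cases hfp : f p < (δ : EReal)
      · exact le_trans (min_le_left _ _) (iInf₂_le p ⟨hp.1.trans_le hle, hp.2, hfp⟩)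
      · push_neg at hfp
        exact le_trans (min_le_right _ _)
          (ENNReal.div_le_div (ofReal_le_ePlus (hbot p) hfp) (hdist p δ' hp.1))
end

section
/- Let X and Y be metric spaces, f : X×Y → ℝ ∪ {+∞} with f(x̄,ȳ) = 0 satisfying (P1) and (P2). Then the uniform strict slope of f at (x̄,ȳ) satisfies \overline{|∇f|}^◇(x̄,ȳ) ≥ liminf_{x→x̄, f(x,y)↓0} f(x,y)/d(x,x̄), where the right-hand side is the limit as ρ↓0 of the infimum of f(x,y)/d(x,x̄) over all (x,y) with d(x,x̄) < ρ and 0 < f(x,y) < ρ. -/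
open Filter Metric Topology ENNReal

variable {X Y : Type*} [MetricSpace X] [MetricSpace Y]

/-- The ρ-metric on `X × Y`: `d_ρ((x,y),(u,v)) := max {d(x,u), ρ d(y,v)}`. -/
noncomputable def dRho (ρ : ℝ) (p q : X × Y) : ℝ := max (dist p.1 q.1) (ρ * dist p.2 q.2)

/-- The nonlocal ρ-slope of `f` at `(x,y)`:
`|∇f|^◇_ρ(x,y) := sup_{(u,v)≠(x,y)} [f(x,y) − f₊(u,v)]₊ / d_ρ((x,y),(u,v))`. -/
noncomputable def nlSlopeRho (f : X × Y → EReal) (ρ : ℝ) (p : X × Y) : ℝ≥0∞ :=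
  ⨆ (q : X × Y) (_ : q ≠ p), ePlus (f p - max (f q) 0) / ENNReal.ofReal (dRho ρ p q)

/-- The uniform strict slope of `f` at `(x̄,ȳ)`:
`\overline{|∇f|}^◇(x̄,ȳ) := lim_{ρ↓0} inf {|∇f|^◇_ρ(x,y) : d(x,x̄) < ρ, 0 < f(x,y) < ρ}`
(the limit being a supremum by monotonicity; `inf ∅ = +∞`). -/
noncomputable def uStrictSlope2 (f : X × Y → EReal) (x₀ : X) : ℝ≥0∞ :=
  ⨆ (ρ : ℝ) (_ : 0 < ρ),
    ⨅ (p : X × Y) (_ : dist p.1 x₀ < ρ ∧ 0 < f p ∧ f p < (ρ : EReal)), nlSlopeRho f ρ p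

/-- `\overline{|∇f|}^◇(x̄,ȳ) ≥ liminf_{x→x̄, f(x,y)↓0} f(x,y)/d(x,x̄)`, where the
right-hand side is the limit (= supremum) as `ρ↓0` of the infimum of `f(x,y)/d(x,x̄)` over all
`(x,y)` with `d(x,x̄) < ρ` and `0 < f(x,y) < ρ`. -/
theorem uStrictSlope2_ge (f : X × Y → EReal) (x₀ : X) (y₀ : Y)
    (hbot : ∀ p, f p ≠ ⊥) (hf₀ : f (x₀, y₀) = 0)
    (hP1 : ∀ x : X, ∀ y : Y, y ≠ y₀ → 0 < f (x, y))
    (hP2 : 0 < ⨆ (δ : ℝ) (_ : 0 < δ),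
        ⨅ (p : X × Y) (_ : 0 < f p ∧ f p < (δ : EReal)),
          ePlus (f p) / ENNReal.ofReal (dist p.2 y₀)) :
    (⨆ (ρ : ℝ) (_ : 0 < ρ),
        ⨅ (p : X × Y) (_ : dist p.1 x₀ < ρ ∧ 0 < f p ∧ f p < (ρ : EReal)),
          ePlus (f p) / ENNReal.ofReal (dist p.1 x₀)) ≤ uStrictSlope2 f x₀ := by
  refine le_of_forall_lt fun b hb => ?_
  simp only [lt_iSup_iff] at hb
  obtain ⟨ρ₀, hρ₀, hbI⟩ := hb
  simp only [lt_iSup_iff] at hP2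
  obtain ⟨δ, hδ, hc⟩ := hP2
  set c : ℝ≥0∞ := ⨅ (p : X × Y) (_ : 0 < f p ∧ f p < (δ : EReal)),
      ePlus (f p) / ENNReal.ofReal (dist p.2 y₀) with hcdef
  have hb_top : b ≠ ⊤ := (lt_of_lt_of_le hbI le_top).ne
  have hb1_top : b + 1 ≠ ⊤ := by finiteness
  set ε := (min c 1).toReal with hεdef
  have hmc_ne_top : min c 1 ≠ ⊤ := ((min_le_right c 1).trans_lt ENNReal.one_lt_top).ne
  have hεpos : 0 < ε := ENNReal.toReal_pos (lt_min hc zero_lt_one).ne' hmc_ne_top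
  have hεc : ENNReal.ofReal ε ≤ c := by
    rw [hεdef, ENNReal.ofReal_toReal hmc_ne_top]; exact min_le_left _ _
  set β := (b + 1).toReal with hβdef
  have hβ0 : 0 ≤ β := ENNReal.toReal_nonneg
  set ρ := min (min ρ₀ δ) (ε / (β + 1)) with hρdef
  have hρpos : 0 < ρ := lt_min (lt_min hρ₀ hδ) (by positivity)
  have hρρ₀ : ρ ≤ ρ₀ := (min_le_left _ _).trans (min_le_left _ _)
  have hρδ : ρ ≤ δ := (min_le_left _ _).trans (min_le_right _ _)
  have key : (b + 1) * ENNReal.ofReal ρ ≤ c := by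
    have h1 : (b + 1) = ENNReal.ofReal β := (ENNReal.ofReal_toReal hb1_top).symm
    rw [h1, ← ENNReal.ofReal_mul hβ0]
    refine le_trans (ENNReal.ofReal_le_ofReal ?_) hεc
    have h2 : ρ ≤ ε / (β + 1) := min_le_right _ _
    have h3 : ρ * (β + 1) ≤ ε := (le_div_iff₀ (by positivity)).mp h2
    nlinarith [hρpos.le]
  have hmin : b < min (⨅ (p : X × Y) (_ : dist p.1 x₀ < ρ₀ ∧ 0 < f p ∧ f p < (ρ₀ : EReal)),
      ePlus (f p) / ENNReal.ofReal (dist p.1 x₀)) (b + 1) :=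
    lt_min hbI (ENNReal.lt_add_right hb_top one_ne_zero)
  refine hmin.trans_le ?_
  refine le_trans ?_ (le_iSup₂ (f := fun ρ (_ : 0 < ρ) =>
      ⨅ (p : X × Y) (_ : dist p.1 x₀ < ρ ∧ 0 < f p ∧ f p < (ρ : EReal)), nlSlopeRho f ρ p) ρ hρpos)
  refine le_iInf₂ fun p hp => ?_
  obtain ⟨hp1, hp2, hp3⟩ := hp
  have hfp_ne_bot : f p ≠ ⊥ := hbot p
  have hfpδ : f p < (δ : EReal) := hp3.trans_le (by exact_mod_cast hρδ)
  have hfpρ₀ : f p < (ρ₀ : EReal) := hp3.trans_le (by exact_mod_cast hρρ₀)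
  have hqp : ((x₀, y₀) : X × Y) ≠ p := by
    intro h
    rw [← h, hf₀] at hp2
    exact lt_irrefl _ hp2
  have hle : ePlus (f p - max (f (x₀, y₀)) 0) / ENNReal.ofReal (dRho ρ p (x₀, y₀))
      ≤ nlSlopeRho f ρ p :=
    le_iSup₂ (f := fun (q : X × Y) (_ : q ≠ p) =>
      ePlus (f p - max (f q) 0) / ENNReal.ofReal (dRho ρ p q)) (x₀, y₀) hqp
  rw [hf₀, max_self, sub_zero] at hle
  refine le_trans ?_ hle
  have hfp0 : ePlus (f p) ≠ 0 := by
    unfold ePlus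
    split_ifs with h
    · exact ENNReal.top_ne_zero
    · have hcoe : ((f p).toReal : EReal) = f p := EReal.coe_toReal h hfp_ne_bot
      have : 0 < (f p).toReal := by
        rw [← EReal.coe_pos, hcoe]; exact hp2
      simp [ENNReal.ofReal_eq_zero, not_le, this]
  unfold dRho
  rcases le_total (ρ * dist p.2 y₀) (dist p.1 x₀) with hmax | hmax
  · rw [max_eq_left hmax]
    exact (min_le_left _ _).trans (iInf₂_le p ⟨hp1.trans_le hρρ₀, hp2, hfpρ₀⟩)
  · rw [max_eq_right hmax]
    refine (min_le_right _ _).trans ?_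
    have hcle : c ≤ ePlus (f p) / ENNReal.ofReal (dist p.2 y₀) := iInf₂_le p ⟨hp2, hfpδ⟩
    rw [ENNReal.ofReal_mul hρpos.le,
      ENNReal.le_div_iff_mul_le (Or.inr hfp0) (Or.inl (by finiteness))]
    calc (b + 1) * (ENNReal.ofReal ρ * ENNReal.ofReal (dist p.2 y₀))
        = ((b + 1) * ENNReal.ofReal ρ) * ENNReal.ofReal (dist p.2 y₀) := by ring
      _ ≤ c * ENNReal.ofReal (dist p.2 y₀) := mul_le_mul_left key _
      _ ≤ (ePlus (f p) / ENNReal.ofReal (dist p.2 y₀)) * ENNReal.ofReal (dist p.2 y₀) :=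
          mul_le_mul_left hcle _
      _ ≤ ePlus (f p) := by rw [mul_comm]; exact ENNReal.mul_div_le
end

section
/- Let X and Y be normed linear spaces and f : X×Y → ℝ ∪ {+∞}. Then for every ρ > 0 and every (x,y) ∈ X×Y with f(x,y) < +∞, the ρ-slope of f at (x,y) satisfies |∇f|_ρ(x,y) ≤ |∂f|_{ρ²}(x,y) + ρ. -/
open Filter Metric Topology ENNReal

/-- The Fréchet subdifferential of `g` at `p` (empty when `g(p) = +∞`);
the defining liminf inequality is expressed in the equivalent ε-form. -/
def frSubdiff {E : Type*} [NormedAddCommGroup E] [NormedSpace ℝ E]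
    (g : E → EReal) (p : E) : Set (E →L[ℝ] ℝ) :=
  {l | g p ≠ ⊤ ∧ ∀ ε : ℝ, 0 < ε →
    ∀ᶠ q in 𝓝[≠] p, g p + ((l (q - p) - ε * ‖q - p‖ : ℝ) : EReal) ≤ g q}

variable {X Y : Type*} [NormedAddCommGroup X] [NormedSpace ℝ X]
  [NormedAddCommGroup Y] [NormedSpace ℝ Y]

/-- The ρ-slope of `f` at `(x,y)`:
`|∇f|_ρ(x,y) := limsup_{(u,v)→(x,y), (u,v)≠(x,y)} [f(x,y) − f(u,v)]₊ / ‖(u,v)−(x,y)‖_ρ`,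
where `‖(u,v)‖_ρ = max {‖u‖, ρ‖v‖}`. -/
noncomputable def locSlopeRho (f : X × Y → EReal) (ρ : ℝ) (p : X × Y) : ℝ≥0∞ :=
  Filter.limsup
    (fun q => ePlus (f p - f q) / ENNReal.ofReal (max ‖q.1 - p.1‖ (ρ * ‖q.2 - p.2‖)))
    (𝓝[≠] p)

/-- The subdifferential ρ-slope of `f` at `(x,y)`:
`|∂f|_ρ(x,y) := inf {‖x*‖ : (x*,y*) ∈ ∂f(x,y), ‖y*‖ < ρ}` (`inf ∅ = +∞`). -/
noncomputable def sdSlopeRho (f : X × Y → EReal) (ρ : ℝ) (p : X × Y) : ℝ≥0∞ :=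
  ⨅ (l : X × Y →L[ℝ] ℝ)
    (_ : l ∈ frSubdiff f p ∧ ‖l.comp (ContinuousLinearMap.inr ℝ X Y)‖ < ρ),
      (‖l.comp (ContinuousLinearMap.inl ℝ X Y)‖₊ : ℝ≥0∞)

set_option maxHeartbeats 1000000 in
/-- for every `ρ > 0` and every `(x,y)` with `f(x,y) < +∞`,
`|∇f|_ρ(x,y) ≤ |∂f|_{ρ²}(x,y) + ρ`. -/
theorem locSlopeRho_le_sdSlopeRho_add (f : X × Y → EReal) (hbot : ∀ p, f p ≠ ⊥)
    (ρ : ℝ) (hρ : 0 < ρ) (p : X × Y) (hfin : f p ≠ ⊤) :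
    locSlopeRho f ρ p ≤ sdSlopeRho f (ρ ^ 2) p + ENNReal.ofReal ρ := by
  rw [sdSlopeRho, ENNReal.iInf_add]
  refine le_iInf fun l => ?_
  rw [ENNReal.iInf_add]
  refine le_iInf fun hl => ?_
  set l1 := l.comp (ContinuousLinearMap.inl ℝ X Y) with hl1def
  set l2 := l.comp (ContinuousLinearMap.inr ℝ X Y) with hl2def
  obtain ⟨⟨-, hsub⟩, hl2⟩ := hl
  have key : ∀ ε : ℝ, 0 < ε →
      locSlopeRho f ρ p ≤ ENNReal.ofReal (‖l1‖ + ρ + ε) := by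
    intro ε hε
    set c : ℝ := max 1 ρ⁻¹ with hcdef
    have hc1 : (1:ℝ) ≤ c := le_max_left _ _
    have hcρ : ρ⁻¹ ≤ c := le_max_right _ _
    have hcpos : 0 < c := lt_of_lt_of_le one_pos hc1
    have hε' : 0 < ε / c := div_pos hε hcpos
    rw [locSlopeRho]
    refine Filter.limsup_le_of_le (by isBoundedDefault) ?_
    filter_upwards [hsub (ε / c) hε', self_mem_nhdsWithin] with q hq hqp
    have hqp : q ≠ p := hqp
    set M := max ‖q.1 - p.1‖ (ρ * ‖q.2 - p.2‖) with hMdef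
    have hM : 0 < M := by
      rcases eq_or_ne (q.1 - p.1) 0 with h1 | h1
      · have h2 : q.2 - p.2 ≠ 0 := by
          intro h2
          apply hqp
          have : q - p = 0 := by
            ext
            · simpa using h1
            · simpa using h2
          exact sub_eq_zero.mp this
        exact lt_max_of_lt_right (mul_pos hρ (norm_pos_iff.mpr h2))
      · exact lt_max_of_lt_left (norm_pos_iff.mpr h1)
    rw [ENNReal.div_le_iff (ENNReal.ofReal_pos.mpr hM).ne' ENNReal.ofReal_ne_top,
      ← ENNReal.ofReal_mul (by positivity)]
    rcases eq_or_ne (f q) ⊤ with hqt | hqt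
    · simp only [hqt, EReal.sub_top, ePlus]
      simp
    · set a := (f p).toReal with hadef
      set b := (f q).toReal with hbdef
      have hpa : f p = (a : EReal) := (EReal.coe_toReal hfin (hbot p)).symm
      have hqb : f q = (b : EReal) := (EReal.coe_toReal hqt (hbot q)).symm
      rw [hpa, hqb] at hq ⊢
      rw [← EReal.coe_sub]
      have heP : ePlus ((a - b : ℝ) : EReal) = ENNReal.ofReal (a - b) := by
        simp only [ePlus, if_neg (EReal.coe_ne_top _), EReal.toReal_coe]
      rw [heP]
      refine ENNReal.ofReal_le_ofReal ?_
      have hab : a + (l (q - p) - ε / c * ‖q - p‖) ≤ b := by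
        rw [← EReal.coe_add] at hq
        exact_mod_cast hq
      have hd : l (q - p) = l1 (q.1 - p.1) + l2 (q.2 - p.2) := by
        have hdec : q - p = ((q.1 - p.1 : X), (0:Y)) + ((0:X), (q.2 - p.2 : Y)) := by
          ext <;> simp
        rw [hdec, map_add]
        rfl
      rw [hd] at hab
      have h1 : -(l1 (q.1 - p.1)) ≤ ‖l1‖ * M := by
        have := l1.le_opNorm (q.1 - p.1)
        have h1a : ‖l1 (q.1 - p.1)‖ ≤ ‖l1‖ * M :=
          this.trans (mul_le_mul_of_nonneg_left (le_max_left _ _) (norm_nonneg _))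
        rw [Real.norm_eq_abs] at h1a
        linarith [neg_abs_le (l1 (q.1 - p.1))]
      have h2 : -(l2 (q.2 - p.2)) ≤ ρ * M := by
        have hop := l2.le_opNorm (q.2 - p.2)
        have hmax := le_max_right ‖q.1 - p.1‖ (ρ * ‖q.2 - p.2‖)
        have h2a : ‖l2 (q.2 - p.2)‖ ≤ ρ * M := by
          have : ‖l2‖ * ‖q.2 - p.2‖ ≤ ρ ^ 2 * ‖q.2 - p.2‖ :=
            mul_le_mul_of_nonneg_right hl2.le (norm_nonneg _)
          nlinarith [norm_nonneg (q.2 - p.2)]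
        rw [Real.norm_eq_abs] at h2a
        linarith [neg_abs_le (l2 (q.2 - p.2))]
      have hwn : ‖q - p‖ ≤ c * M := by
        have hnd : ‖q - p‖ = max ‖q.1 - p.1‖ ‖q.2 - p.2‖ := by
          rw [Prod.norm_def]
          simp
        rw [hnd]
        refine max_le ?_ ?_
        · calc ‖q.1 - p.1‖ ≤ M := le_max_left _ _
            _ = 1 * M := (one_mul M).symm
            _ ≤ c * M := mul_le_mul_of_nonneg_right hc1 hM.le
        · have : ρ * ‖q.2 - p.2‖ ≤ M := le_max_right _ _
          calc ‖q.2 - p.2‖ ≤ ρ⁻¹ * M := by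
                rw [le_inv_mul_iff₀ hρ]
                exact this
            _ ≤ c * M := mul_le_mul_of_nonneg_right hcρ hM.le
      have h3 : ε / c * ‖q - p‖ ≤ ε * M := by
        calc ε / c * ‖q - p‖ ≤ ε / c * (c * M) :=
              mul_le_mul_of_nonneg_left hwn hε'.le
          _ = ε * M := by field_simp
      linarith
  refine ENNReal.le_of_forall_pos_le_add fun ε hε _ => ?_
  have hεR : (0:ℝ) < (ε : ℝ) := by exact_mod_cast hε
  calc locSlopeRho f ρ p ≤ ENNReal.ofReal (‖l1‖ + ρ + ε) := key ε hεR
    _ = ↑‖l1‖₊ + ENNReal.ofReal ρ + ↑ε := by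
        rw [ENNReal.ofReal_add (by positivity) hεR.le,
          ENNReal.ofReal_add (norm_nonneg _) hρ.le,
          ofReal_norm, enorm_eq_nnnorm, ENNReal.ofReal_coe_nnreal]
end

section
/- Let X and Y be metric spaces, f : X×Y → ℝ ∪ {+∞} with f(x̄,ȳ) = 0 satisfying (P1) and (P2). Then Er f(x̄,ȳ) ≤ \overline{|∇f|}^◇(x̄,ȳ). -/
open Filter Metric Topology ENNReal

variable {X Y : Type*} [MetricSpace X] [MetricSpace Y]

/-- The error bound modulus `Er f(x̄,ȳ) := liminf_{x→x̄, f(x,y)>0} f(x,y)/d(x,S(f))`,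
with `S(f) = {x : f(x,ȳ) ≤ 0}`. -/
noncomputable def erMod2 (f : X × Y → EReal) (x₀ : X) (y₀ : Y) : ℝ≥0∞ :=
  ⨆ (δ : ℝ) (_ : 0 < δ),
    ⨅ (p : X × Y) (_ : dist p.1 x₀ < δ ∧ 0 < f p),
      ePlus (f p) / EMetric.infEdist p.1 {x | f (x, y₀) ≤ 0}

private theorem key_aux (f : X × Y → EReal) (x₀ : X) (y₀ : Y)
    (hbot : ∀ p, f p ≠ ⊥) (hf₀ : f (x₀, y₀) = 0)
    (hP2 : 0 < ⨆ (δ : ℝ) (_ : 0 < δ),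
        ⨅ (p : X × Y) (_ : 0 < f p ∧ f p < (δ : EReal)),
          ePlus (f p) / ENNReal.ofReal (dist p.2 y₀))
    (m'' m : ℝ≥0∞) (h0 : m'' ≠ 0) (hm''m : m'' < m) (hm : m < erMod2 f x₀ y₀) :
    m'' ≤ uStrictSlope2 f x₀ := by
  have hm''t : m'' ≠ ⊤ := (hm''m.trans_le le_top).ne
  have hmt : m ≠ ⊤ := (hm.trans_le le_top).ne
  have hm0 : m ≠ 0 := by
    intro h; exact h0 (le_antisymm (h ▸ hm''m.le) zero_le)
  -- extract δ from the error bound modulus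
  rw [erMod2, lt_iSup_iff] at hm
  obtain ⟨δ, hm⟩ := hm
  rw [lt_iSup_iff] at hm
  obtain ⟨hδ, hm⟩ := hm
  -- extract δ₂ and c from (P2)
  rw [lt_iSup_iff] at hP2
  obtain ⟨δ₂, hP2⟩ := hP2
  rw [lt_iSup_iff] at hP2
  obtain ⟨hδ₂, hP2⟩ := hP2
  obtain ⟨c, hc0, hcv⟩ := exists_between hP2
  have hct : c ≠ ⊤ := (hcv.trans_le le_top).ne
  -- choose ρ
  have hcm0 : c / m'' ≠ 0 := by
    simp [ENNReal.div_eq_zero_iff, hc0.ne', hm''t]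
  have hcmt : c / m'' ≠ ⊤ := by
    simp [ENNReal.div_eq_top, hct, h0]
  set ρ0 : ℝ := (c / m'').toReal with hρ0
  have hρ0pos : 0 < ρ0 := ENNReal.toReal_pos hcm0 hcmt
  set ρ : ℝ := min δ (min δ₂ ρ0) with hρdef
  have hρpos : 0 < ρ := lt_min hδ (lt_min hδ₂ hρ0pos)
  have hρδ : ρ ≤ δ := min_le_left _ _
  have hρδ₂ : ρ ≤ δ₂ := (min_le_right _ _).trans (min_le_left _ _)
  have hρρ0 : ρ ≤ ρ0 := (min_le_right _ _).trans (min_le_right _ _)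
  have hkey : m'' * ENNReal.ofReal ρ ≤ c := by
    calc m'' * ENNReal.ofReal ρ ≤ m'' * ENNReal.ofReal ρ0 := by
          exact mul_le_mul_right (ENNReal.ofReal_le_ofReal hρρ0) _
      _ = m'' * (c / m'') := by rw [hρ0, ENNReal.ofReal_toReal hcmt]
      _ = c := ENNReal.mul_div_cancel h0 hm''t
  -- show m'' ≤ uStrictSlope2
  rw [uStrictSlope2]
  refine le_iSup₂_of_le ρ hρpos (le_iInf₂ fun p hp => ?_)
  obtain ⟨hpx, hfp0, hfpρ⟩ := hp
  have hfpt : f p ≠ ⊤ := (hfpρ.trans (EReal.coe_lt_top ρ)).ne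
  set fv : ℝ := (f p).toReal with hfvdef
  have hfv : (fv : EReal) = f p := EReal.coe_toReal hfpt (hbot p)
  have hfv0 : 0 < fv := by
    rw [← EReal.coe_lt_coe_iff]; rw [hfv]; exact_mod_cast hfp0
  have hfvρ : fv < ρ := by
    rw [← EReal.coe_lt_coe_iff]; rw [hfv]; exact hfpρ
  have hePlus : ePlus (f p) = ENNReal.ofReal fv := by rw [ePlus, if_neg hfpt]
  have hfvne : ENNReal.ofReal fv ≠ 0 := (ENNReal.ofReal_pos.mpr hfv0).ne'
  -- the solution set
  set S : Set X := {x | f (x, y₀) ≤ 0} with hSdef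
  have hx₀S : x₀ ∈ S := le_of_eq hf₀
  set D : ℝ≥0∞ := EMetric.infEdist p.1 S with hDdef
  have hDt : D ≠ ⊤ :=
    ((EMetric.infEdist_le_edist_of_mem hx₀S).trans_lt (edist_lt_top p.1 x₀)).ne
  -- error bound at p
  have hmD : m ≤ ePlus (f p) / D :=
    (hm.trans_le (iInf₂_le p ⟨hpx.trans_le hρδ, hfp0⟩)).le
  rw [hePlus] at hmD
  have hmD' : m * D ≤ ENNReal.ofReal fv :=
    (ENNReal.le_div_iff_mul_le (Or.inr hfvne) (Or.inl hDt)).mp hmD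
  -- (P2) at p
  have hcd : c ≤ ePlus (f p) / ENNReal.ofReal (dist p.2 y₀) := by
    refine hcv.le.trans (iInf₂_le p ⟨hfp0, hfpρ.trans_le ?_⟩)
    exact_mod_cast EReal.coe_le_coe_iff.mpr hρδ₂
  rw [hePlus] at hcd
  have hcd' : c * ENNReal.ofReal (dist p.2 y₀) ≤ ENNReal.ofReal fv :=
    (ENNReal.le_div_iff_mul_le (Or.inr hfvne) (Or.inl ENNReal.ofReal_ne_top)).mp hcd
  -- choose u ∈ S close to p.1
  set R : ℝ≥0∞ := max (ENNReal.ofReal fv / m'') (D * m / m'') with hRdef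
  have hDR : D < R := by
    rcases eq_or_ne D 0 with hD0 | hD0
    · rw [hD0]
      exact lt_max_of_lt_left (ENNReal.div_pos hfvne hm''t)
    · refine lt_max_of_lt_right ?_
      rw [ENNReal.lt_div_iff_mul_lt (Or.inl h0) (Or.inl hm''t)]
      exact (ENNReal.mul_lt_mul_iff_right hD0 hDt).mpr hm''m
  obtain ⟨u, huS, hu⟩ := EMetric.infEdist_lt_iff.mp hDR
  have hmD'' : D * m ≤ ENNReal.ofReal fv := by rwa [mul_comm] at hmD'
  have hRle : R ≤ ENNReal.ofReal fv / m'' :=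
    max_le le_rfl (ENNReal.div_le_div_right hmD'' m'')
  have hmu : m'' * edist p.1 u ≤ ENNReal.ofReal fv := by
    calc m'' * edist p.1 u ≤ m'' * R := mul_le_mul_right hu.le _
      _ ≤ m'' * (ENNReal.ofReal fv / m'') := mul_le_mul_right hRle _
      _ = ENNReal.ofReal fv := ENNReal.mul_div_cancel h0 hm''t
  -- the competitor point q
  set q : X × Y := (u, y₀) with hqdef
  have hq : q ≠ p := by
    intro h
    have : f q ≤ 0 := huS
    rw [h] at this
    exact absurd this (not_le.mpr hfp0)
  rw [nlSlopeRho]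
  refine le_iSup₂_of_le q hq ?_
  have hnum : ePlus (f p - max (f q) 0) = ENNReal.ofReal fv := by
    have : max (f q) 0 = 0 := max_eq_right huS
    rw [this, sub_zero, hePlus]
  rw [hnum]
  have hdd : ENNReal.ofReal (dRho ρ p q) =
      max (ENNReal.ofReal (dist p.1 u)) (ENNReal.ofReal (ρ * dist p.2 y₀)) := by
    rw [dRho]
    exact (Monotone.map_max fun _ _ h => ENNReal.ofReal_le_ofReal h)
  rw [hdd, ENNReal.le_div_iff_mul_le (Or.inr hfvne)
    (Or.inl (max_lt ENNReal.ofReal_lt_top ENNReal.ofReal_lt_top).ne),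
    mul_max]
  refine max_le ?_ ?_
  · rw [← edist_dist]; exact hmu
  · rw [ENNReal.ofReal_mul hρpos.le, ← mul_assoc]
    calc m'' * ENNReal.ofReal ρ * ENNReal.ofReal (dist p.2 y₀)
        ≤ c * ENNReal.ofReal (dist p.2 y₀) := mul_le_mul_left hkey _
      _ ≤ ENNReal.ofReal fv := hcd'

/-- `Er f(x̄,ȳ) ≤ \overline{|∇f|}^◇(x̄,ȳ)`. -/
theorem erMod2_le_uStrictSlope2 (f : X × Y → EReal) (x₀ : X) (y₀ : Y)
    (hbot : ∀ p, f p ≠ ⊥) (hf₀ : f (x₀, y₀) = 0)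
    (hP1 : ∀ x : X, ∀ y : Y, y ≠ y₀ → 0 < f (x, y))
    (hP2 : 0 < ⨆ (δ : ℝ) (_ : 0 < δ),
        ⨅ (p : X × Y) (_ : 0 < f p ∧ f p < (δ : EReal)),
          ePlus (f p) / ENNReal.ofReal (dist p.2 y₀)) :
    erMod2 f x₀ y₀ ≤ uStrictSlope2 f x₀ := by
  refine le_of_forall_lt fun a ha => ?_
  obtain ⟨m'', hm''a, hm''⟩ := exists_between ha
  obtain ⟨m, hmm'', hm⟩ := exists_between hm''
  have h0 : m'' ≠ 0 := ((zero_le : (0:ℝ≥0∞) ≤ a).trans_lt hm''a).ne'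
  exact lt_of_lt_of_le hm''a (key_aux f x₀ y₀ hbot hf₀ hP2 m'' m h0 hmm'' hm)
end

section
/- Let X and Y be complete metric spaces, f : X×Y → ℝ ∪ {+∞} with f(x̄,ȳ) = 0 satisfying (P1) and (P2). If f_+ is lower semicontinuous (in the product topology) on a neighbourhood of (x̄,ȳ), then Er f(x̄,ȳ) = \overline{|∇f|}^◇(x̄,ȳ). -/
open Filter Metric Topology ENNReal

variable {X Y : Type*} [MetricSpace X] [MetricSpace Y] [CompleteSpace X] [CompleteSpace Y]

set_option linter.unusedSectionVars false
set_option linter.unusedVariables false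
set_option maxHeartbeats 1000000

lemma ePlus_coe (r : ℝ) : ePlus (r : EReal) = ENNReal.ofReal r := by
  simp [ePlus, EReal.toReal_coe]

lemma ePlus_nonpos {a : EReal} (h : a ≤ 0) : ePlus a = 0 := by
  have ht : a ≠ ⊤ := by
    intro he; rw [he] at h; exact absurd h (by simp)
  simp only [ePlus, ht, if_false]
  rcases eq_or_ne a ⊥ with hb | hb
  · simp [hb]
  · have := EReal.toReal_le_toReal h hb (by simp)
    simp only [EReal.toReal_zero] at this
    simp [ENNReal.ofReal_eq_zero.2 this]

lemma ePlus_pos {a : EReal} (h : 0 < a) : 0 < ePlus a := by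
  rcases eq_or_ne a ⊤ with ht | ht
  · simp [ePlus, ht]
  · have hb : a ≠ ⊥ := fun hb => by simp [hb] at h
    have : (0 : ℝ) < a.toReal := by
      have := EReal.coe_toReal ht hb
      rw [← this] at h
      exact_mod_cast h
    simp only [ePlus, ht, if_false]
    exact ENNReal.ofReal_pos.2 this

lemma toReal_pos' {a : EReal} (h : 0 < a) (ht : a ≠ ⊤) : 0 < a.toReal := by
  have hb : a ≠ ⊥ := fun hb => by simp [hb] at h
  have := EReal.coe_toReal ht hb
  rw [← this] at h
  exact_mod_cast h

lemma dRho_nonneg {ρ : ℝ} (hρ : 0 ≤ ρ) (p q : X × Y) : 0 ≤ dRho ρ p q :=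
  le_trans dist_nonneg (le_max_left _ _)

lemma dRho_self (ρ : ℝ) (p : X × Y) : dRho ρ p p = 0 := by simp [dRho]

lemma dRho_comm (ρ : ℝ) (p q : X × Y) : dRho ρ p q = dRho ρ q p := by
  simp [dRho, dist_comm]

lemma dRho_triangle {ρ : ℝ} (hρ : 0 ≤ ρ) (p q r : X × Y) :
    dRho ρ p r ≤ dRho ρ p q + dRho ρ q r := by
  apply max_le
  · exact le_trans (dist_triangle _ _ _) (add_le_add (le_max_left _ _) (le_max_left _ _))
  · calc ρ * dist p.2 r.2 ≤ ρ * (dist p.2 q.2 + dist q.2 r.2) :=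
          mul_le_mul_of_nonneg_left (dist_triangle _ _ _) hρ
    _ = ρ * dist p.2 q.2 + ρ * dist q.2 r.2 := mul_add _ _ _
    _ ≤ _ := add_le_add (le_max_right _ _) (le_max_right _ _)

lemma dRho_pos {ρ : ℝ} (hρ : 0 < ρ) {p q : X × Y} (h : q ≠ p) : 0 < dRho ρ p q := by
  rcases lt_or_eq_of_le (dRho_nonneg hρ.le p q) with hlt | heq
  · exact hlt
  · exfalso
    have heq' : dRho ρ p q = 0 := heq.symm
    have h1 : dist p.1 q.1 ≤ 0 := le_trans (le_max_left _ _) heq'.le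
    have h2 : ρ * dist p.2 q.2 ≤ 0 := le_trans (le_max_right _ _) heq'.le
    have h2' : ρ * dist p.2 q.2 = 0 := le_antisymm h2 (mul_nonneg hρ.le dist_nonneg)
    have h2'' : dist p.2 q.2 = 0 := by
      rcases mul_eq_zero.1 h2' with h | h
      · exact absurd h hρ.ne'
      · exact h
    exact h (Prod.ext (dist_eq_zero.1 (le_antisymm h1 dist_nonneg)).symm (dist_eq_zero.1 h2'').symm)

lemma ofReal_max {a b : ℝ} (ha : 0 ≤ a) (hb : 0 ≤ b) :
    ENNReal.ofReal (max a b) = max (ENNReal.ofReal a) (ENNReal.ofReal b) := by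
  rcases le_total a b with h | h
  · rw [max_eq_right h, max_eq_right (ENNReal.ofReal_le_ofReal h)]
  · rw [max_eq_left h, max_eq_left (ENNReal.ofReal_le_ofReal h)]

lemma toReal_nonneg' {a : EReal} (h : 0 ≤ a) : 0 ≤ a.toReal := by
  rcases eq_or_ne a ⊤ with h1 | h1
  · simp [h1]
  · have := EReal.toReal_le_toReal h (by simp : (0:EReal) ≠ ⊥) h1
    simpa using this

theorem myEkeland {ρ : ℝ} (hρ : 0 < ρ) (C : Set (X × Y)) (hC : IsClosed C)
    (F : X × Y → ℝ) (hF : LowerSemicontinuousOn F C) (hF0 : ∀ q ∈ C, 0 ≤ F q)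
    {ε : ℝ} (hε : 0 < ε) (p : X × Y) (hp : p ∈ C) :
    ∃ w ∈ C, F w + ε * dRho ρ p w ≤ F p ∧ ∀ q ∈ C, F w ≤ F q + ε * dRho ρ w q := by
  -- the choice step
  have step : ∀ (n : ℕ) (z : X × Y), ∃ w, z ∈ C → (w ∈ C ∧ F w + ε * dRho ρ z w ≤ F z) ∧
      ∀ q ∈ C, F q + ε * dRho ρ z q ≤ F z → F w - (1/2)^n ≤ F q := by
    intro n z
    by_cases hz : z ∈ C
    swap
    · exact ⟨z, fun h => absurd h hz⟩
    have hzD : F z + ε * dRho ρ z z ≤ F z := by rw [dRho_self]; simp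
    set D := {q ∈ C | F q + ε * dRho ρ z q ≤ F z} with hD
    have hne : (F '' D).Nonempty := ⟨F z, z, ⟨hz, hzD⟩, rfl⟩
    have hbdd : BddBelow (F '' D) := ⟨0, by rintro a ⟨q, hq, rfl⟩; exact hF0 q hq.1⟩
    obtain ⟨a, ⟨w, hwD, rfl⟩, ha⟩ :=
      Real.lt_sInf_add_pos hne (pow_pos (by norm_num : (0:ℝ) < 1/2) n)
    refine ⟨w, fun _ => ⟨⟨hwD.1, hwD.2⟩, fun q hqC hq => ?_⟩⟩
    have hle : sInf (F '' D) ≤ F q := csInf_le hbdd ⟨q, ⟨hqC, hq⟩, rfl⟩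
    linarith
  choose g hg using step
  set u : ℕ → X × Y := fun n => Nat.rec p (fun k w => g k w) n with hu
  have hu0 : u 0 = p := rfl
  have huS : ∀ n, u (n+1) = g n (u n) := fun n => rfl
  have huC : ∀ n, u n ∈ C := by
    intro n; induction n with
    | zero => exact hp
    | succ k ih => rw [huS]; exact ((hg k (u k) ih).1).1
  set A : ℕ → ℝ := fun n => F (u n) with hA
  have hdec : ∀ n, A (n+1) + ε * dRho ρ (u n) (u (n+1)) ≤ A n := by
    intro n
    have := ((hg n (u n) (huC n)).1).2
    rw [← huS] at this; exact this
  have hmin : ∀ n, ∀ q ∈ C, F q + ε * dRho ρ (u n) q ≤ A n → A (n+1) - (1/2)^n ≤ F q := by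
    intro n q hq h
    have := (hg n (u n) (huC n)).2 q hq h
    rw [← huS] at this; exact this
  have hanti : Antitone A := by
    apply antitone_nat_of_succ_le
    intro n
    have h1 := hdec n
    have h2 : 0 ≤ ε * dRho ρ (u n) (u (n+1)) := mul_nonneg hε.le (dRho_nonneg hρ.le _ _)
    linarith
  have hAlb : ∀ n, 0 ≤ A n := fun n => hF0 _ (huC n)
  have hchain : ∀ n m, n ≤ m → ε * dRho ρ (u n) (u m) ≤ A n - A m := by
    intro n m h
    induction m, h using Nat.le_induction with
    | base => rw [dRho_self]; simp
    | succ m hm ih =>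
      have htri := dRho_triangle hρ.le (u n) (u m) (u (m+1))
      have h2 := hdec m
      have h3 := mul_le_mul_of_nonneg_left htri hε.le
      rw [mul_add] at h3
      linarith
  -- convergence
  have hbR : BddBelow (Set.range A) := ⟨0, by rintro a ⟨n, rfl⟩; exact hAlb n⟩
  set L : ℝ := ⨅ n, A n with hL
  have hLt : Tendsto A atTop (𝓝 L) := tendsto_atTop_ciInf hanti hbR
  have hLle : ∀ n, L ≤ A n := fun n => ciInf_le hbR n
  have hdRb : ∀ N n m, N ≤ n → N ≤ m → dRho ρ (u n) (u m) ≤ (A N - L)/ε := by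
    have key : ∀ N a b, N ≤ a → N ≤ b → a ≤ b → dRho ρ (u a) (u b) ≤ (A N - L)/ε := by
      intro N a b ha hb hab
      have h1 := hchain a b hab
      have h2 : A a ≤ A N := hanti ha
      have h3 : L ≤ A b := hLle b
      rw [le_div_iff₀ hε, mul_comm]
      linarith
    intro N n m hn hm
    rcases le_total n m with h | h
    · exact key N n m hn hm h
    · rw [dRho_comm]; exact key N m n hm hn h
  have hb0 : Tendsto (fun N => (A N - L)/ε) atTop (𝓝 0) := by
    have h1 : Tendsto (fun N => A N - L) atTop (𝓝 (L - L)) := hLt.sub_const L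
    rw [sub_self] at h1
    have := h1.div_const ε
    rwa [zero_div] at this
  have hcx : CauchySeq (fun n => (u n).1) := by
    apply cauchySeq_of_le_tendsto_0 (fun N => (A N - L)/ε) ?_ hb0
    intro n m N hn hm
    exact le_trans (le_max_left _ _) (hdRb N n m hn hm)
  have hcy : CauchySeq (fun n => (u n).2) := by
    apply cauchySeq_of_le_tendsto_0 (fun N => (A N - L)/ε/ρ) ?_ ?_
    · intro n m N hn hm
      have h1 : ρ * dist (u n).2 (u m).2 ≤ dRho ρ (u n) (u m) := le_max_right _ _
      have h2 := hdRb N n m hn hm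
      rw [le_div_iff₀ hρ, mul_comm]
      linarith
    · have := hb0.div_const ρ
      rwa [zero_div] at this
  obtain ⟨xh, hxh⟩ := cauchySeq_tendsto_of_complete hcx
  obtain ⟨yh, hyh⟩ := cauchySeq_tendsto_of_complete hcy
  set w : X × Y := (xh, yh) with hw
  have hup : Tendsto u atTop (𝓝 w) := by
    have := hxh.prodMk_nhds hyh
    simpa using this
  have hwC : w ∈ C := hC.mem_of_tendsto hup (Eventually.of_forall huC)
  have hdlim : ∀ n, Tendsto (fun m => dRho ρ (u n) (u m)) atTop (𝓝 (dRho ρ (u n) w)) := by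
    intro n
    have hcont : Continuous fun q : X × Y => dRho ρ (u n) q := by
      unfold dRho
      exact (continuous_const.dist continuous_fst).max
        (continuous_const.mul (continuous_const.dist continuous_snd))
    exact (hcont.tendsto w).comp hup
  have key : ∀ n, F w + ε * dRho ρ (u n) w ≤ A n := by
    intro n
    by_contra hcon
    push_neg at hcon
    set dd := dRho ρ (u n) w with hdd
    set r : ℝ := F w - (F w + ε * dd - A n)/2 with hr
    have hrlt : r < F w := by rw [hr]; linarith
    have htend : Tendsto u atTop (𝓝[C] w) :=
      tendsto_nhdsWithin_iff.2 ⟨hup, Eventually.of_forall huC⟩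
    have hev1 : ∀ᶠ m in atTop, r < F (u m) := htend.eventually (hF w hwC r hrlt)
    have hev3 : ∀ᶠ m in atTop, ε * dRho ρ (u n) (u m) ≤ A n - r := by
      filter_upwards [hev1, eventually_ge_atTop n] with m h1 h2
      have := hchain n m h2
      linarith
    have hlim2 : Tendsto (fun m => ε * dRho ρ (u n) (u m)) atTop (𝓝 (ε * dd)) :=
      (hdlim n).const_mul ε
    have hfin : ε * dd ≤ A n - r := le_of_tendsto hlim2 hev3
    rw [hr] at hfin
    linarith
  refine ⟨w, hwC, ?_, ?_⟩
  · have h := key 0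
    have hA0 : A 0 = F p := by rw [hA]; simp [hu0]
    rw [hu0, hA0] at h
    exact h
  · intro q hqC
    by_contra hcon
    push_neg at hcon
    have hq : ∀ n, F q + ε * dRho ρ (u n) q ≤ A n := by
      intro n
      have h1 := key n
      have htri := dRho_triangle hρ.le (u n) w q
      have h3 := mul_le_mul_of_nonneg_left htri hε.le
      rw [mul_add] at h3
      linarith
    have hq2 : ∀ n, A (n+1) - (1/2)^n ≤ F q := fun n => hmin n q hqC (hq n)
    have hFle : F w ≤ F q := by
      have h3 : ∀ n : ℕ, F w - (1/2)^n ≤ F q := by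
        intro n
        have h4 := key (n+1)
        have h5 : 0 ≤ ε * dRho ρ (u (n+1)) w := mul_nonneg hε.le (dRho_nonneg hρ.le _ _)
        have h6 := hq2 n
        linarith
      have hlim : Tendsto (fun n : ℕ => F w - (1/2)^n) atTop (𝓝 (F w - 0)) :=
        tendsto_const_nhds.sub (tendsto_pow_atTop_nhds_zero_of_lt_one (by norm_num) (by norm_num))
      have := le_of_tendsto hlim (Eventually.of_forall h3)
      linarith
    rcases eq_or_ne q w with hqw | hqw
    · rw [hqw, dRho_self] at hcon; linarith
    · have hd := dRho_pos hρ hqw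
      have : 0 < ε * dRho ρ w q := mul_pos hε hd
      linarith

theorem dir1 (f : X × Y → EReal) (x₀ : X) (y₀ : Y)
    (hbot : ∀ p, f p ≠ ⊥) (hf₀ : f (x₀, y₀) = 0)
    (hP2 : 0 < ⨆ (δ : ℝ) (_ : 0 < δ),
        ⨅ (p : X × Y) (_ : 0 < f p ∧ f p < (δ : EReal)),
          ePlus (f p) / ENNReal.ofReal (dist p.2 y₀)) :
    erMod2 f x₀ y₀ ≤ uStrictSlope2 f x₀ := by
  by_contra hcon
  push_neg at hcon
  rw [erMod2] at hcon
  obtain ⟨δ, hδex⟩ := lt_iSup_iff.1 hcon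
  obtain ⟨hδ, hlt⟩ := lt_iSup_iff.1 hδex
  obtain ⟨b, hb1, hb2⟩ := exists_between hlt
  have hbtop : b ≠ ⊤ := hb2.ne_top
  have hb0 : 0 < b := lt_of_le_of_lt (zero_le) hb1
  set br := b.toReal with hbr
  have hbrpos : 0 < br := ENNReal.toReal_pos hb0.ne' hbtop
  have hbeq : ENNReal.ofReal br = b := ENNReal.ofReal_toReal hbtop
  -- unpack hP2
  obtain ⟨δ₂, h2ex⟩ := lt_iSup_iff.1 hP2
  obtain ⟨hδ₂, hJ⟩ := lt_iSup_iff.1 h2ex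
  set c := min (⨅ (p : X × Y) (_ : 0 < f p ∧ f p < (δ₂ : EReal)),
      ePlus (f p) / ENNReal.ofReal (dist p.2 y₀)) 1 with hc
  have hc0 : 0 < c := lt_min hJ zero_lt_one
  have hctop : c ≠ ⊤ := ((min_le_right _ _).trans_lt ENNReal.one_lt_top).ne
  have Hy : ∀ p : X × Y, 0 < f p → f p < (δ₂:EReal) →
      c * ENNReal.ofReal (dist p.2 y₀) ≤ ePlus (f p) := by
    intro p h1 h2
    have hle : c ≤ ePlus (f p) / ENNReal.ofReal (dist p.2 y₀) :=
      le_trans (min_le_left _ _) (iInf₂_le p ⟨h1, h2⟩)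
    rcases eq_or_ne (ENNReal.ofReal (dist p.2 y₀)) 0 with h0 | h0
    · rw [h0, mul_zero]; exact zero_le
    · exact (ENNReal.le_div_iff_mul_le (Or.inl h0) (Or.inl ENNReal.ofReal_ne_top)).1 hle
  set cr := c.toReal with hcrdef
  have hcr : 0 < cr := ENNReal.toReal_pos hc0.ne' hctop
  have hceq : ENNReal.ofReal cr = c := ENNReal.ofReal_toReal hctop
  -- choose ρ
  set ρ := min δ (min δ₂ (cr / br)) with hρdef
  have hρ : 0 < ρ := lt_min hδ (lt_min hδ₂ (div_pos hcr hbrpos))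
  have hρδ : ρ ≤ δ := min_le_left _ _
  have hρδ₂ : ρ ≤ δ₂ := le_trans (min_le_right _ _) (min_le_left _ _)
  have hρc : b * ENNReal.ofReal ρ ≤ c := by
    have h1 : ENNReal.ofReal ρ ≤ ENNReal.ofReal (cr/br) :=
      ENNReal.ofReal_le_ofReal (le_trans (min_le_right _ _) (min_le_right _ _))
    have h2 : ENNReal.ofReal (cr/br) = c / b := by
      rw [ENNReal.ofReal_div_of_pos hbrpos, hceq, hbeq]
    calc b * ENNReal.ofReal ρ ≤ b * (c/b) := mul_le_mul_right (h2 ▸ h1) b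
      _ = c := ENNReal.mul_div_cancel hb0.ne' hbtop
  -- main bound
  have hkey : b ≤ ⨅ (p : X × Y) (_ : dist p.1 x₀ < ρ ∧ 0 < f p ∧ f p < (ρ:EReal)),
      nlSlopeRho f ρ p := by
    refine le_iInf₂ fun p hp => ?_
    obtain ⟨hp1, hp2, hp3⟩ := hp
    have hgp : b < ePlus (f p) / EMetric.infEdist p.1 {x | f (x, y₀) ≤ 0} :=
      lt_of_lt_of_le hb2 (iInf₂_le p ⟨lt_of_lt_of_le hp1 hρδ, hp2⟩)
    set S := {x : X | f (x, y₀) ≤ 0} with hS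
    have hx₀S : x₀ ∈ S := by simp only [hS, Set.mem_setOf_eq, hf₀]; exact le_refl 0
    set e := EMetric.infEdist p.1 S with he
    have hetop : e ≠ ⊤ := by
      apply ne_top_of_le_ne_top ?_ (EMetric.infEdist_le_edist_of_mem hx₀S)
      rw [edist_dist]; exact ENNReal.ofReal_ne_top
    have hftop : f p ≠ ⊤ := (hp3.trans (EReal.coe_lt_top ρ)).ne
    have ht0 : 0 < ePlus (f p) := ePlus_pos hp2
    set T := ePlus (f p) with hT
    have hTtop : T ≠ ⊤ := by
      rw [hT]; simp only [ePlus, hftop, if_false]; exact ENNReal.ofReal_ne_top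
    have hbe : b * e < T := by
      rcases eq_or_ne e 0 with h0 | h0
      · rw [h0, mul_zero]; exact ht0
      · by_contra hcon2
        push_neg at hcon2
        have hfin : T / e ≤ b := by
          calc T / e ≤ b * e / e := ENNReal.div_le_div hcon2 le_rfl
            _ = b := by rw [mul_div_assoc, ENNReal.div_self h0 hetop, mul_one]
        exact absurd hgp (not_lt.2 hfin)
    set η := (T - b * e) / b with hη
    have hη0 : η ≠ 0 := (ENNReal.div_pos (tsub_pos_iff_lt.2 hbe).ne' hbtop).ne'
    have hbeη : b * (e + η) ≤ T := by
      rw [mul_add, hη, ENNReal.mul_div_cancel hb0.ne' hbtop, add_tsub_cancel_of_le hbe.le]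
    obtain ⟨u, huS, hu⟩ := EMetric.infEdist_lt_iff.1
      (show EMetric.infEdist p.1 S < e + η from he ▸ lt_add_right hetop hη0)
    set q : X × Y := (u, y₀) with hq
    have hqp : q ≠ p := by
      intro hqe
      have hle : f p ≤ 0 := by rw [← hqe]; exact huS
      exact absurd hp2 (not_lt.2 hle)
    have hmax : max (f q) 0 = 0 := max_eq_right huS
    have hnum : ePlus (f p - max (f q) 0) = T := by rw [hmax]; simp [hT]
    have hterm : b ≤ ePlus (f p - max (f q) 0) / ENNReal.ofReal (dRho ρ p q) := by
      rw [hnum]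
      set D := ENNReal.ofReal (dRho ρ p q) with hD
      rcases eq_or_ne D 0 with h0 | h0
      · rw [h0, ENNReal.div_zero ht0.ne']; exact le_top
      · rw [ENNReal.le_div_iff_mul_le (Or.inl h0) (Or.inl ENNReal.ofReal_ne_top)]
        have hDeq : D = max (ENNReal.ofReal (dist p.1 u)) (ENNReal.ofReal (ρ * dist p.2 y₀)) := by
          rw [hD]
          show ENNReal.ofReal (max (dist p.1 q.1) (ρ * dist p.2 q.2)) = _
          rw [ofReal_max dist_nonneg (mul_nonneg hρ.le dist_nonneg)]
        rw [hDeq]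
        rcases le_total (ENNReal.ofReal (dist p.1 u)) (ENNReal.ofReal (ρ * dist p.2 y₀)) with hmx | hmx
        · rw [max_eq_right hmx]
          have h1 : ENNReal.ofReal (ρ * dist p.2 y₀)
              = ENNReal.ofReal ρ * ENNReal.ofReal (dist p.2 y₀) := ENNReal.ofReal_mul hρ.le
          have h2 : ENNReal.ofReal (dist p.2 y₀) ≤ T / c := by
            rw [ENNReal.le_div_iff_mul_le (Or.inl hc0.ne') (Or.inl hctop), mul_comm]
            exact Hy p hp2 (lt_of_lt_of_le hp3 (EReal.coe_le_coe_iff.2 hρδ₂))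
          calc b * ENNReal.ofReal (ρ * dist p.2 y₀)
              = b * ENNReal.ofReal ρ * ENNReal.ofReal (dist p.2 y₀) := by rw [h1, mul_assoc]
            _ ≤ c * (T / c) := mul_le_mul' hρc h2
            _ = T := ENNReal.mul_div_cancel hc0.ne' hctop
        · rw [max_eq_left hmx]
          have h3 : ENNReal.ofReal (dist p.1 u) ≤ e + η := by
            rw [← edist_dist]; exact hu.le
          calc b * ENNReal.ofReal (dist p.1 u) ≤ b * (e + η) := mul_le_mul_right h3 b
            _ ≤ T := hbeη
    calc b ≤ _ := hterm
      _ ≤ nlSlopeRho f ρ p := le_iSup₂ (f := fun (q : X × Y) (_ : q ≠ p) =>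
          ePlus (f p - max (f q) 0) / ENNReal.ofReal (dRho ρ p q)) q hqp
  have hfin : b ≤ uStrictSlope2 f x₀ := by
    rw [uStrictSlope2]
    refine le_trans hkey ?_
    exact le_iSup₂ (f := fun (r : ℝ) (_ : 0 < r) =>
      ⨅ (p : X × Y) (_ : dist p.1 x₀ < r ∧ 0 < f p ∧ f p < (r:EReal)), nlSlopeRho f r p) ρ hρ
  exact absurd hb1 (not_lt.2 hfin)

theorem dir2 (f : X × Y → EReal) (x₀ : X) (y₀ : Y)
    (hbot : ∀ p, f p ≠ ⊥) (hf₀ : f (x₀, y₀) = 0)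
    (hP1 : ∀ x : X, ∀ y : Y, y ≠ y₀ → 0 < f (x, y))
    (hP2 : 0 < ⨆ (δ : ℝ) (_ : 0 < δ),
        ⨅ (p : X × Y) (_ : 0 < f p ∧ f p < (δ : EReal)),
          ePlus (f p) / ENNReal.ofReal (dist p.2 y₀))
    (hlsc : ∃ U ∈ 𝓝 (x₀, y₀), LowerSemicontinuousOn (fun p => max (f p) 0) U) :
    uStrictSlope2 f x₀ ≤ erMod2 f x₀ y₀ := by
  by_contra hcon
  push_neg at hcon
  rw [uStrictSlope2] at hcon
  obtain ⟨ρ₀, hρex⟩ := lt_iSup_iff.1 hcon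
  obtain ⟨hρ₀, hI⟩ := lt_iSup_iff.1 hρex
  obtain ⟨b, hb1, hb2⟩ := exists_between hI
  obtain ⟨b'', hbb1, hbb2⟩ := exists_between hb2
  have hbtop : b ≠ ⊤ := hbb1.ne_top
  have hb''top : b'' ≠ ⊤ := hbb2.ne_top
  have hb0 : 0 < b := lt_of_le_of_lt (zero_le) hb1
  set br := b.toReal with hbrdef
  have hbrpos : 0 < br := ENNReal.toReal_pos hb0.ne' hbtop
  have hbeq : ENNReal.ofReal br = b := ENNReal.ofReal_toReal hbtop
  set ε := b''.toReal with hεdef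
  have hε : 0 < ε := ENNReal.toReal_pos (lt_of_le_of_lt (zero_le) hbb1).ne' hb''top
  have hεeq : ENNReal.ofReal ε = b'' := ENNReal.ofReal_toReal hb''top
  have hεb : br < ε := (ENNReal.toReal_lt_toReal hbtop hb''top).2 hbb1
  -- unpack hP2
  obtain ⟨δ₂, h2ex⟩ := lt_iSup_iff.1 hP2
  obtain ⟨hδ₂, hJ⟩ := lt_iSup_iff.1 h2ex
  set c := min (⨅ (p : X × Y) (_ : 0 < f p ∧ f p < (δ₂ : EReal)),
      ePlus (f p) / ENNReal.ofReal (dist p.2 y₀)) 1 with hc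
  have hc0 : 0 < c := lt_min hJ zero_lt_one
  have hctop : c ≠ ⊤ := ((min_le_right _ _).trans_lt ENNReal.one_lt_top).ne
  set cr := c.toReal with hcrdef
  have hcr : 0 < cr := ENNReal.toReal_pos hc0.ne' hctop
  have hceq : ENNReal.ofReal cr = c := ENNReal.ofReal_toReal hctop
  have Hy : ∀ p : X × Y, 0 < f p → f p < (δ₂:EReal) →
      c * ENNReal.ofReal (dist p.2 y₀) ≤ ePlus (f p) := by
    intro p h1 h2
    have hle : c ≤ ePlus (f p) / ENNReal.ofReal (dist p.2 y₀) :=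
      le_trans (min_le_left _ _) (iInf₂_le p ⟨h1, h2⟩)
    rcases eq_or_ne (ENNReal.ofReal (dist p.2 y₀)) 0 with h0 | h0
    · rw [h0, mul_zero]; exact zero_le
    · exact (ENNReal.le_div_iff_mul_le (Or.inl h0) (Or.inl ENNReal.ofReal_ne_top)).1 hle
  have Hy' : ∀ p : X × Y, 0 < f p → f p < (δ₂:EReal) → f p ≠ ⊤ →
      dist p.2 y₀ ≤ (f p).toReal / cr := by
    intro p h1 h2 h3
    have htp : 0 < (f p).toReal := toReal_pos' h1 h3
    have hTeq : ePlus (f p) = ENNReal.ofReal (f p).toReal := by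
      simp only [ePlus, h3, if_false]
    have h4 := Hy p h1 h2
    rw [hTeq] at h4
    have h5 : ENNReal.ofReal (dist p.2 y₀) ≤ ENNReal.ofReal (f p).toReal / c := by
      rw [ENNReal.le_div_iff_mul_le (Or.inl hc0.ne') (Or.inl hctop), mul_comm]
      exact h4
    rw [← hceq, ← ENNReal.ofReal_div_of_pos hcr] at h5
    exact (ENNReal.ofReal_le_ofReal_iff (div_nonneg htp.le hcr.le)).1 h5
  -- unpack hlsc
  obtain ⟨U, hU, hlscU⟩ := hlsc
  obtain ⟨r₂, hr₂, hballU⟩ := Metric.mem_nhds_iff.1 hU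
  set r := r₂ / 2 with hrdef
  have hr : 0 < r := by positivity
  set B := closedBall x₀ r ×ˢ closedBall y₀ r with hB
  have hBU : B ⊆ U := by
    intro z hz
    apply hballU
    rw [mem_ball, Prod.dist_eq]
    rw [Set.mem_prod] at hz
    simp only [mem_closedBall] at hz
    rw [sup_lt_iff]
    constructor <;> [skip; skip] <;>
      first
        | exact lt_of_le_of_lt hz.1 (by rw [hrdef]; linarith)
        | exact lt_of_le_of_lt hz.2 (by rw [hrdef]; linarith)
  have hBclosed : IsClosed B := (isClosed_closedBall).prod (isClosed_closedBall)
  -- choose δ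
  set δ := min (min (δ₂/br) (ρ₀/2)) (min (min (ρ₀/br) (r/4)) (min (ρ₀*r/4) (cr*r/(4*br))))
    with hδdef
  have hδ : 0 < δ := by
    refine lt_min (lt_min (by positivity) (by positivity))
      (lt_min (lt_min (by positivity) (by positivity)) (lt_min (by positivity) (by positivity)))
  have hdA : br * δ ≤ δ₂ := by
    have h : δ ≤ δ₂/br := le_trans (min_le_left _ _) (min_le_left _ _)
    calc br * δ ≤ br * (δ₂/br) := mul_le_mul_of_nonneg_left h hbrpos.le
      _ = δ₂ := by field_simp
  have hdB : 2 * δ ≤ ρ₀ := by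
    have h : δ ≤ ρ₀/2 := le_trans (min_le_left _ _) (min_le_right _ _)
    linarith only [h]
  have hdC : br * δ ≤ ρ₀ := by
    have h : δ ≤ ρ₀/br := le_trans (min_le_right _ _)
      (le_trans (min_le_left _ _) (min_le_left _ _))
    calc br * δ ≤ br * (ρ₀/br) := mul_le_mul_of_nonneg_left h hbrpos.le
      _ = ρ₀ := by field_simp
  have hdD : δ ≤ r/4 := le_trans (min_le_right _ _)
    (le_trans (min_le_left _ _) (min_le_right _ _))
  have hdE : δ ≤ ρ₀*r/4 := le_trans (min_le_right _ _)
    (le_trans (min_le_right _ _) (min_le_left _ _))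
  have hdF : br * δ ≤ cr*r/4 := by
    have h : δ ≤ cr*r/(4*br) := le_trans (min_le_right _ _)
      (le_trans (min_le_right _ _) (min_le_right _ _))
    calc br * δ ≤ br * (cr*r/(4*br)) := mul_le_mul_of_nonneg_left h hbrpos.le
      _ = cr*r/4 := by field_simp
  -- main claim
  have hmain : b ≤ erMod2 f x₀ y₀ := by
    rw [erMod2]
    refine le_trans ?_ (le_iSup₂ (f := fun (d : ℝ) (_ : 0 < d) =>
      ⨅ (p : X × Y) (_ : dist p.1 x₀ < d ∧ 0 < f p),
        ePlus (f p) / EMetric.infEdist p.1 {x | f (x, y₀) ≤ 0}) δ hδ)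
    refine le_iInf₂ fun p hp => ?_
    obtain ⟨x, y⟩ := p
    obtain ⟨hp1, hp2⟩ := hp
    simp only at hp1 hp2
    by_contra hgp
    push_neg at hgp
    replace hgp : ePlus (f (x, y)) / EMetric.infEdist x {x | f (x, y₀) ≤ 0} < b := hgp
    set S := {x : X | f (x, y₀) ≤ 0} with hS
    have hx₀S : x₀ ∈ S := by simp only [hS, Set.mem_setOf_eq, hf₀]; exact le_refl 0
    set e := EMetric.infEdist x S with he
    set T := ePlus (f (x, y)) with hT
    have ht0 : 0 < T := ePlus_pos hp2
    have he0 : e ≠ 0 := by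
      intro h0
      rw [h0, ENNReal.div_zero ht0.ne'] at hgp
      exact absurd hgp not_top_lt
    have hetop : e ≠ ⊤ := by
      apply ne_top_of_le_ne_top ?_ (EMetric.infEdist_le_edist_of_mem hx₀S)
      rw [edist_dist]; exact ENNReal.ofReal_ne_top
    set er := e.toReal with herdef
    have her : 0 < er := ENNReal.toReal_pos he0 hetop
    have heeq : ENNReal.ofReal er = e := ENNReal.ofReal_toReal hetop
    have hTlt : T < b * e := by
      have := (ENNReal.div_lt_iff (Or.inl he0) (Or.inl hetop)).1 hgp
      exact this
    have hTtop : T ≠ ⊤ := hTlt.ne_top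
    have hfptop : f (x, y) ≠ ⊤ := by
      intro h
      rw [hT] at hTtop
      simp [ePlus, h] at hTtop
    set t := (f (x, y)).toReal with htdef
    have ht : 0 < t := toReal_pos' hp2 hfptop
    have hfeq : f (x, y) = (t : EReal) := (EReal.coe_toReal hfptop (hbot _)).symm
    have hTeq : T = ENNReal.ofReal t := by simp only [hT, ePlus, hfptop, if_false]; rfl
    have htlt : t < br * er := by
      have h1 : T < ENNReal.ofReal (br * er) := by
        rw [ENNReal.ofReal_mul hbrpos.le, hbeq, heeq]; exact hTlt
      rw [hTeq] at h1
      exact (ENNReal.ofReal_lt_ofReal_iff (by positivity)).1 h1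
    have herdx : er ≤ dist x x₀ := by
      have h1 : e ≤ ENNReal.ofReal (dist x x₀) := by
        rw [← edist_dist]; exact EMetric.infEdist_le_edist_of_mem hx₀S
      exact ENNReal.toReal_le_of_le_ofReal dist_nonneg h1
    have herδ : er < δ := lt_of_le_of_lt herdx hp1
    have htδ : t < br * δ :=
      lt_of_lt_of_le htlt (mul_le_mul_of_nonneg_left herδ.le hbrpos.le)
    -- y-distance bound
    have hfδ₂ : f (x, y) < (δ₂ : EReal) := by
      rw [hfeq]
      exact_mod_cast (lt_of_lt_of_le htδ hdA : t < δ₂)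
    have hyd : dist y y₀ ≤ t / cr := Hy' (x, y) hp2 hfδ₂ hfptop
    have hydr : dist y y₀ ≤ r / 4 := by
      apply le_trans hyd
      rw [div_le_iff₀ hcr]
      linarith only [htδ, hdF]
    -- the set C and function F
    set C := {q : X × Y | q ∈ B ∧ max (f q) 0 ≤ (t : EReal)} with hC
    have hCB : C ⊆ B := fun q hq => hq.1
    have hCU : C ⊆ U := fun q hq => hBU hq.1
    have hCclosed : IsClosed C := by
      apply isClosed_of_closure_subset
      intro z hz
      have hzB : z ∈ B := hBclosed.closure_subset (closure_mono hCB hz)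
      refine ⟨hzB, ?_⟩
      by_contra hgt
      push_neg at hgt
      have hnb : (𝓝[C] z).NeBot := mem_closure_iff_nhdsWithin_neBot.1 hz
      have hev := hlscU z (hBU hzB) (t : EReal) hgt
      have hev2 : ∀ᶠ q in 𝓝[C] z, (t:EReal) < max (f q) 0 := (nhdsWithin_mono z hCU) hev
      obtain ⟨q, hq1, hq2⟩ := (hev2.and self_mem_nhdsWithin).exists
      exact absurd hq1 (not_lt.2 hq2.2)
    set F := fun q : X × Y => (max (f q) 0).toReal with hF
    have hmaxreal : ∀ q ∈ C, max (f q) 0 = ((F q : ℝ) : EReal) := by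
      intro q hq
      have h1 : max (f q) 0 ≠ ⊤ := (lt_of_le_of_lt hq.2 (EReal.coe_lt_top t)).ne
      have h2 : max (f q) 0 ≠ ⊥ := by
        intro h
        have : (0:EReal) ≤ max (f q) 0 := le_max_right _ _
        rw [h] at this
        simp at this
      exact (EReal.coe_toReal h1 h2).symm
    have hFlsc : LowerSemicontinuousOn F C := by
      intro z hzC r' hr'
      have hzeq := hmaxreal z hzC
      have h1 : (r' : EReal) < max (f z) 0 := by rw [hzeq]; exact_mod_cast hr'
      have hev := hlscU z (hCU hzC) (r' : EReal) h1
      have hev2 : ∀ᶠ q in 𝓝[C] z, (r':EReal) < max (f q) 0 := (nhdsWithin_mono z hCU) hev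
      filter_upwards [hev2, self_mem_nhdsWithin] with q hq1 hq2
      have := hmaxreal q hq2
      rw [this] at hq1
      exact_mod_cast hq1
    have hF0 : ∀ q ∈ C, 0 ≤ F q := fun q _ => toReal_nonneg' (le_max_right _ _)
    -- p ∈ C
    have hpB : (x, y) ∈ B := by
      rw [hB, Set.mem_prod]
      constructor
      · simp only [mem_closedBall]
        linarith only [hp1, hdD, hr]
      · simp only [mem_closedBall]
        linarith only [hydr, hr]
    have hmaxp : max (f (x,y)) 0 = f (x,y) := max_eq_left hp2.le
    have hFp : F (x, y) = t := by rw [hF]; simp only; rw [hmaxp]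
    have hpC : (x, y) ∈ C := ⟨hpB, by rw [hmaxp, hfeq]⟩
    -- Ekeland
    obtain ⟨w, hwC, hwd, hwmin⟩ := myEkeland hρ₀ C hCclosed F hFlsc hF0 hε (x, y) hpC
    have hFw0 : 0 ≤ F w := hF0 w hwC
    rw [hFp] at hwd
    have hdpw : dRho ρ₀ (x, y) w ≤ t / ε := by
      rw [le_div_iff₀ hε, mul_comm]
      linarith only [hwd, hFw0]
    have hdxw : dist x w.1 ≤ t / ε := le_trans (le_max_left _ _) hdpw
    have hdyw : dist y w.2 ≤ t / (ε * ρ₀) := by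
      have h1 : ρ₀ * dist y w.2 ≤ dRho ρ₀ (x,y) w := le_max_right _ _
      have h2 : ε * dRho ρ₀ (x,y) w ≤ t := by linarith only [hwd, hFw0]
      have h3 : ε * (ρ₀ * dist y w.2) ≤ t :=
        le_trans (mul_le_mul_of_nonneg_left h1 hε.le) h2
      rw [le_div_iff₀ (by positivity : (0:ℝ) < ε * ρ₀)]
      calc dist y w.2 * (ε * ρ₀) = ε * (ρ₀ * dist y w.2) := by ring
        _ ≤ t := h3
    have htε : t / ε < er := by
      rw [div_lt_iff₀ hε]
      calc t < br * er := htlt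
        _ < ε * er := mul_lt_mul_of_pos_right hεb her
        _ = er * ε := mul_comm _ _
    have hwS : w.1 ∉ S := by
      intro hw
      have h1 : e ≤ ENNReal.ofReal (dist x w.1) := by
        rw [← edist_dist]; exact EMetric.infEdist_le_edist_of_mem hw
      have h3 : er ≤ dist x w.1 := ENNReal.toReal_le_of_le_ofReal dist_nonneg h1
      linarith only [h3, hdxw, htε]
    have hfw : 0 < f w := by
      rcases eq_or_ne w.2 y₀ with hw2 | hw2
      · have hne : ¬ (f (w.1, y₀) ≤ 0) := hwS
        have hw' : (w.1, y₀) = w := by rw [← hw2]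
        rw [← hw']
        exact not_le.1 hne
      · have := hP1 w.1 w.2 hw2
        rwa [Prod.mk.eta] at this
    have hfwle : f w ≤ (t : EReal) := le_trans (le_max_left _ _) hwC.2
    have hfwtop : f w ≠ ⊤ := (lt_of_le_of_lt hfwle (EReal.coe_lt_top t)).ne
    set tw := (f w).toReal with htwdef
    have htw0 : 0 < tw := toReal_pos' hfw hfwtop
    have hfweq : f w = (tw : EReal) := (EReal.coe_toReal hfwtop (hbot w)).symm
    have htwt : tw ≤ t := by
      rw [hfweq] at hfwle; exact_mod_cast hfwle
    have hmaxw : max (f w) 0 = f w := max_eq_left hfw.le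
    have hFw : F w = tw := by rw [hF]; simp only; rw [hmaxw]
    -- w qualifies for the slope inf
    have hwx : dist w.1 x₀ < 2 * δ := by
      have h1 : dist w.1 x₀ ≤ dist w.1 x + dist x x₀ := dist_triangle _ _ _
      have h2 : dist w.1 x = dist x w.1 := dist_comm _ _
      linarith only [h1, h2, hdxw, htε, herδ, hp1]
    have hq1 : dist w.1 x₀ < ρ₀ := lt_of_lt_of_le hwx hdB
    have hq3 : f w < (ρ₀ : EReal) := by
      rw [hfweq]
      exact_mod_cast (lt_of_le_of_lt htwt (lt_of_lt_of_le htδ hdC) : tw < ρ₀)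
    -- w.2 near y₀
    have hwy : dist w.2 y₀ ≤ r / 2 := by
      have h1 : dist w.2 y₀ ≤ dist w.2 y + dist y y₀ := dist_triangle _ _ _
      have h2 : dist w.2 y = dist y w.2 := dist_comm _ _
      have h3 : t / (ε * ρ₀) ≤ r / 4 := by
        rw [div_le_iff₀ (by positivity)]
        calc t ≤ br * δ := htδ.le
          _ ≤ br * (ρ₀*r/4) := mul_le_mul_of_nonneg_left hdE hbrpos.le
          _ ≤ ε * (ρ₀*r/4) := mul_le_mul_of_nonneg_right hεb.le (by positivity)
          _ = r / 4 * (ε * ρ₀) := by ring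
      linarith only [h1, h2, hdyw, h3, hydr]
    -- upper bound on the slope at w
    have hub : nlSlopeRho f ρ₀ w ≤ b'' := by
      rw [nlSlopeRho]
      refine iSup₂_le fun q hq => ?_
      set D := ENNReal.ofReal (dRho ρ₀ w q) with hD
      have hDpos : 0 < dRho ρ₀ w q := dRho_pos hρ₀ hq
      have hD0 : D ≠ 0 := (ENNReal.ofReal_pos.2 hDpos).ne'
      rcases eq_or_ne (max (f q) 0) ⊤ with htq | htq
      · rw [htq, EReal.sub_top]
        have : ePlus ⊥ = 0 := by simp [ePlus]
        rw [this, ENNReal.zero_div]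
        exact zero_le
      · have hbq : max (f q) 0 ≠ ⊥ := by
          intro h
          have h2 : (0:EReal) ≤ max (f q) 0 := le_max_right _ _
          rw [h] at h2; simp at h2
        set s := (max (f q) 0).toReal with hs
        have hs0 : 0 ≤ s := toReal_nonneg' (le_max_right _ _)
        have hseq : max (f q) 0 = (s : EReal) := (EReal.coe_toReal htq hbq).symm
        have hnum : ePlus (f w - max (f q) 0) = ENNReal.ofReal (tw - s) := by
          rw [hseq, hfweq, ← EReal.coe_sub, ePlus_coe]
        rw [hnum]
        by_cases hqC : q ∈ C
        · have hek := hwmin q hqC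
          have hFq : F q = s := rfl
          rw [hFw, hFq] at hek
          have h1 : tw - s ≤ ε * dRho ρ₀ w q := by linarith only [hek]
          calc ENNReal.ofReal (tw - s) / D
              ≤ ENNReal.ofReal (ε * dRho ρ₀ w q) / D :=
                ENNReal.div_le_div (ENNReal.ofReal_le_ofReal h1) le_rfl
            _ = ENNReal.ofReal ε * D / D := by rw [ENNReal.ofReal_mul hε.le]
            _ ≤ b'' := by
                rw [mul_div_assoc, ENNReal.div_self hD0 ENNReal.ofReal_ne_top, mul_one]
                exact hεeq.le
        · by_cases hst : (t : EReal) < max (f q) 0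
          · have hts : t < s := by rw [hseq] at hst; exact_mod_cast hst
            rw [ENNReal.ofReal_eq_zero.2 (by linarith only [htwt, hts] : tw - s ≤ 0), ENNReal.zero_div]
            exact zero_le
          · push_neg at hst
            have hqB : q ∉ B := fun hqB => hqC ⟨hqB, hst⟩
            have hnum2 : ENNReal.ofReal (tw - s) ≤ ENNReal.ofReal t :=
              ENNReal.ofReal_le_ofReal (by linarith only [htwt, hs0])
            -- which coordinate escapes
            have hqBor : r < dist q.1 x₀ ∨ r < dist q.2 y₀ := by
              by_contra hboth
              push_neg at hboth
              exact hqB (by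
                rw [hB, Set.mem_prod]
                exact ⟨mem_closedBall.2 hboth.1, mem_closedBall.2 hboth.2⟩)
            have hbound : ∃ R : ℝ, 0 < R ∧ R ≤ dRho ρ₀ w q ∧ t ≤ ε * R := by
              rcases hqBor with hx | hy
              · refine ⟨r/2, by positivity, ?_, ?_⟩
                · have h1 : dist q.1 x₀ ≤ dist q.1 w.1 + dist w.1 x₀ := dist_triangle _ _ _
                  have h2 : dist q.1 w.1 = dist w.1 q.1 := dist_comm _ _
                  have h3 : dist w.1 q.1 ≤ dRho ρ₀ w q := le_max_left _ _
                  linarith only [h1, h2, h3, hx, hwx, hdD]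
                · calc t ≤ br * δ := htδ.le
                    _ ≤ br * (r/4) := mul_le_mul_of_nonneg_left hdD hbrpos.le
                    _ ≤ ε * (r/4) := mul_le_mul_of_nonneg_right hεb.le (by positivity)
                    _ ≤ ε * (r/2) := mul_le_mul_of_nonneg_left (by linarith only [hr]) hε.le
              · refine ⟨ρ₀ * (r/2), by positivity, ?_, ?_⟩
                · have h1 : dist q.2 y₀ ≤ dist q.2 w.2 + dist w.2 y₀ := dist_triangle _ _ _
                  have h2 : dist q.2 w.2 = dist w.2 q.2 := dist_comm _ _
                  have h4 : ρ₀ * dist w.2 q.2 ≤ dRho ρ₀ w q := le_max_right _ _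
                  have h5 : r/2 ≤ dist w.2 q.2 := by linarith only [h1, h2, hy, hwy]
                  calc ρ₀ * (r/2) ≤ ρ₀ * dist w.2 q.2 := mul_le_mul_of_nonneg_left h5 hρ₀.le
                    _ ≤ dRho ρ₀ w q := h4
                · calc t ≤ br * δ := htδ.le
                    _ ≤ br * (ρ₀*r/4) := mul_le_mul_of_nonneg_left hdE hbrpos.le
                    _ ≤ ε * (ρ₀*r/4) := mul_le_mul_of_nonneg_right hεb.le (by positivity)
                    _ ≤ ε * (ρ₀*(r/2)) := mul_le_mul_of_nonneg_left
                        (by linarith only [mul_nonneg hρ₀.le hr.le]) hε.le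
            obtain ⟨R, hR0, hRd, hRt⟩ := hbound
            calc ENNReal.ofReal (tw - s) / D ≤ ENNReal.ofReal t / ENNReal.ofReal R :=
                ENNReal.div_le_div hnum2 (by rw [hD]; exact ENNReal.ofReal_le_ofReal hRd)
              _ = ENNReal.ofReal (t / R) := (ENNReal.ofReal_div_of_pos hR0).symm
              _ ≤ b'' := by
                  rw [← hεeq]
                  apply ENNReal.ofReal_le_ofReal
                  rw [div_le_iff₀ hR0]
                  linarith only [hRt]
    have hlb : b'' ≤ nlSlopeRho f ρ₀ w :=
      le_trans hbb2.le (iInf₂_le w ⟨hq1, hfw, hq3⟩)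
    exact absurd (lt_of_lt_of_le hbb2 (le_trans (iInf₂_le w ⟨hq1, hfw, hq3⟩) hub)) (lt_irrefl b'')
  exact absurd hb1 (not_lt.2 hmain)

/-- if `X`, `Y` are complete and `f₊` is lower semicontinuous on a
neighbourhood of `(x̄,ȳ)`, then `Er f(x̄,ȳ) = \overline{|∇f|}^◇(x̄,ȳ)`. -/
theorem erMod2_eq_uStrictSlope2 (f : X × Y → EReal) (x₀ : X) (y₀ : Y)
    (hbot : ∀ p, f p ≠ ⊥) (hf₀ : f (x₀, y₀) = 0)
    (hP1 : ∀ x : X, ∀ y : Y, y ≠ y₀ → 0 < f (x, y))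
    (hP2 : 0 < ⨆ (δ : ℝ) (_ : 0 < δ),
        ⨅ (p : X × Y) (_ : 0 < f p ∧ f p < (δ : EReal)),
          ePlus (f p) / ENNReal.ofReal (dist p.2 y₀))
    (hlsc : ∃ U ∈ 𝓝 (x₀, y₀), LowerSemicontinuousOn (fun p => max (f p) 0) U) :
    erMod2 f x₀ y₀ = uStrictSlope2 f x₀ := by
  exact le_antisymm (dir1 f x₀ y₀ hbot hf₀ hP2) (dir2 f x₀ y₀ hbot hf₀ hP1 hP2 hlsc)
end

section
/- Let X and Y be metric spaces, f : X×Y → ℝ ∪ {+∞} with f(x̄,ȳ) = 0 satisfying (P1) and (P2). Then Er f(x̄,ȳ) ≤ \overline{|∇f|}^◇_1(x̄,ȳ), where \overline{|∇f|}^◇_1(x̄,ȳ) is the uniform strict slope computed with the sum-type parametric metric d¹_ρ((x,y),(u,v)) := d(x,u) + ρ d(y,v) in place of the maximum-type metric. -/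
open Filter Metric Topology ENNReal

variable {X Y : Type*} [MetricSpace X] [MetricSpace Y]

/-- The sum-type parametric metric on `X × Y`:
`d¹_ρ((x,y),(u,v)) := d(x,u) + ρ d(y,v)`. -/
noncomputable def dRhoSum (ρ : ℝ) (p q : X × Y) : ℝ := dist p.1 q.1 + ρ * dist p.2 q.2

/-- The nonlocal ρ-slope of `f` at `(x,y)` computed with the sum-type metric:
`|∇f|^{◇,1}_ρ(x,y) := sup_{(u,v)≠(x,y)} [f(x,y) − f₊(u,v)]₊ / d¹_ρ((x,y),(u,v))`. -/
noncomputable def nlSlopeRhoSum (f : X × Y → EReal) (ρ : ℝ) (p : X × Y) : ℝ≥0∞ :=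
  ⨆ (q : X × Y) (_ : q ≠ p), ePlus (f p - max (f q) 0) / ENNReal.ofReal (dRhoSum ρ p q)

/-- The uniform strict slope of `f` at `(x̄,ȳ)` computed with the sum-type metric:
`\overline{|∇f|}^◇_1(x̄,ȳ) := lim_{ρ↓0} inf {|∇f|^{◇,1}_ρ(x,y) : d(x,x̄) < ρ, 0 < f(x,y) < ρ}`
(the limit being a supremum by monotonicity; `inf ∅ = +∞`). -/
noncomputable def uStrictSlope2Sum (f : X × Y → EReal) (x₀ : X) : ℝ≥0∞ :=
  ⨆ (ρ : ℝ) (_ : 0 < ρ),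
    ⨅ (p : X × Y) (_ : dist p.1 x₀ < ρ ∧ 0 < f p ∧ f p < (ρ : EReal)), nlSlopeRhoSum f ρ p

/-- `Er f(x̄,ȳ) ≤ \overline{|∇f|}^◇_1(x̄,ȳ)` (sum-type parametric metric). -/
theorem erMod2_le_uStrictSlope2Sum (f : X × Y → EReal) (x₀ : X) (y₀ : Y)
    (hbot : ∀ p, f p ≠ ⊥) (hf₀ : f (x₀, y₀) = 0)
    (hP1 : ∀ x : X, ∀ y : Y, y ≠ y₀ → 0 < f (x, y))
    (hP2 : 0 < ⨆ (δ : ℝ) (_ : 0 < δ),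
        ⨅ (p : X × Y) (_ : 0 < f p ∧ f p < (δ : EReal)),
          ePlus (f p) / ENNReal.ofReal (dist p.2 y₀)) :
    erMod2 f x₀ y₀ ≤ uStrictSlope2Sum f x₀ := by
  refine le_of_forall_lt_imp_le_of_dense fun r hr => ?_
  rcases eq_or_ne r 0 with rfl | hr0
  · exact zero_le
  obtain ⟨r', hrr', hr'Er⟩ := exists_between hr
  have hrtop : r ≠ ⊤ := hr.ne_top
  have hr'top : r' ≠ ⊤ := hr'Er.ne_top
  have hr'0 : r' ≠ 0 := (hr0.bot_lt.trans hrr').ne'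
  rw [erMod2] at hr'Er
  simp only [lt_iSup_iff] at hr'Er
  obtain ⟨δ, hδ, hδEr⟩ := hr'Er
  simp only [lt_iSup_iff] at hP2
  obtain ⟨δ₂, hδ₂, hP2'⟩ := hP2
  set c : ℝ≥0∞ := min (⨅ (p : X × Y) (_ : 0 < f p ∧ f p < (δ₂ : EReal)),
      ePlus (f p) / ENNReal.ofReal (dist p.2 y₀)) 1 with hc
  have hc0 : c ≠ 0 := (lt_min hP2' one_pos).ne'
  have hctop : c ≠ ⊤ := ((min_le_right _ 1).trans_lt (by norm_num)).ne
  have hrinvtop : r⁻¹ ≠ ⊤ := ENNReal.inv_ne_top.mpr hr0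
  have hsub0 : r⁻¹ - r'⁻¹ ≠ 0 := (tsub_pos_of_lt (ENNReal.inv_lt_inv.mpr hrr')).ne'
  have hprodtop : c * (r⁻¹ - r'⁻¹) ≠ ⊤ :=
    ENNReal.mul_ne_top hctop (ne_top_of_le_ne_top hrinvtop tsub_le_self)
  set ρ₀ : ℝ := (c * (r⁻¹ - r'⁻¹)).toReal with hρ₀
  have hρ₀pos : 0 < ρ₀ := ENNReal.toReal_pos (ENNReal.mul_pos hc0 hsub0).ne' hprodtop
  set ρ : ℝ := min δ (min δ₂ ρ₀) with hρdef
  have hρpos : 0 < ρ := lt_min hδ (lt_min hδ₂ hρ₀pos)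
  have hρδ : ρ ≤ δ := min_le_left _ _
  have hρδ₂ : ρ ≤ δ₂ := (min_le_right _ _).trans (min_le_left _ _)
  have hρρ₀' : ρ ≤ ρ₀ := (min_le_right _ _).trans (min_le_right _ _)
  rw [uStrictSlope2Sum]
  refine le_iSup₂_of_le ρ hρpos (le_iInf₂ fun p hp => ?_)
  obtain ⟨hpx, hpf, hpρ⟩ := hp
  have hfpT : f p ≠ ⊤ := hpρ.ne_top
  set F : ℝ≥0∞ := ePlus (f p) with hF
  have hFval : F = ENNReal.ofReal (f p).toReal := by rw [hF, ePlus, if_neg hfpT]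
  have htR : 0 < (f p).toReal := by
    have h := hpf
    rw [← EReal.coe_toReal hfpT (hbot p)] at h
    exact EReal.coe_pos.mp h
  have hF0 : F ≠ 0 := by
    rw [hFval]
    simpa [ENNReal.ofReal_eq_zero, not_le] using htR
  have hFtop : F ≠ ⊤ := by rw [hFval]; exact ENNReal.ofReal_ne_top
  -- bound on the distance to y₀ from (P2)
  have hcB : edist p.2 y₀ ≤ F / c := by
    have h1 : c ≤ F / ENNReal.ofReal (dist p.2 y₀) := by
      refine (min_le_left _ _).trans (iInf₂_le p ⟨hpf, ?_⟩)
      exact hpρ.trans_le (EReal.coe_le_coe_iff.mpr hρδ₂)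
    have h2 : c * ENNReal.ofReal (dist p.2 y₀) ≤ F :=
      (ENNReal.le_div_iff_mul_le (Or.inr hF0) (Or.inr hFtop)).mp h1
    rw [edist_dist]
    exact (ENNReal.le_div_iff_mul_le (Or.inl hc0) (Or.inl hctop)).mpr (by rwa [mul_comm])
  -- bound on the distance to S
  have hDF : EMetric.infEdist p.1 {x | f (x, y₀) ≤ 0} < F / r' := by
    have h1 : r' < F / EMetric.infEdist p.1 {x | f (x, y₀) ≤ 0} :=
      hδEr.trans_le (iInf₂_le p ⟨hpx.trans_le hρδ, hpf⟩)
    rcases eq_or_ne (EMetric.infEdist p.1 {x | f (x, y₀) ≤ 0}) 0 with hD0 | hD0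
    · rw [hD0]; exact ENNReal.div_pos hF0 hr'top
    · rw [ENNReal.lt_div_iff_mul_lt (Or.inl hr'0) (Or.inl hr'top)]
      have h2 := ENNReal.mul_lt_of_lt_div h1
      rwa [mul_comm]
  obtain ⟨u, huS, hu⟩ := EMetric.infEdist_lt_iff.mp hDF
  have hq : (u, y₀) ≠ p := by
    intro h
    exact absurd hpf (not_lt.mpr (h ▸ huS))
  rw [nlSlopeRhoSum]
  refine le_iSup₂_of_le (u, y₀) hq ?_
  have hnum : ePlus (f p - max (f (u, y₀)) 0) = F := by
    rw [max_eq_right (huS : f (u, y₀) ≤ 0), sub_zero]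
  have hden : ENNReal.ofReal (dRhoSum ρ p (u, y₀)) =
      edist p.1 u + ENNReal.ofReal ρ * edist p.2 y₀ := by
    rw [dRhoSum, ENNReal.ofReal_add dist_nonneg (mul_nonneg hρpos.le dist_nonneg),
      ENNReal.ofReal_mul hρpos.le, edist_dist, edist_dist]
  rw [hnum, hden]
  have hρρ₀ : ENNReal.ofReal ρ ≤ c * (r⁻¹ - r'⁻¹) := by
    calc ENNReal.ofReal ρ ≤ ENNReal.ofReal ρ₀ := ENNReal.ofReal_le_ofReal hρρ₀'
      _ = c * (r⁻¹ - r'⁻¹) := ENNReal.ofReal_toReal hprodtop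
  have hdenb : edist p.1 u + ENNReal.ofReal ρ * edist p.2 y₀ ≤ F * r⁻¹ := by
    calc edist p.1 u + ENNReal.ofReal ρ * edist p.2 y₀
        ≤ F / r' + c * (r⁻¹ - r'⁻¹) * (F / c) := add_le_add hu.le (mul_le_mul' hρρ₀ hcB)
      _ = F * r'⁻¹ + F * ((r⁻¹ - r'⁻¹) * (c * c⁻¹)) := by
          rw [div_eq_mul_inv, div_eq_mul_inv]; ring
      _ = F * (r'⁻¹ + (r⁻¹ - r'⁻¹)) := by
          rw [ENNReal.mul_inv_cancel hc0 hctop, mul_one, mul_add]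
      _ = F * r⁻¹ := by rw [add_tsub_cancel_of_le (ENNReal.inv_le_inv.mpr hrr'.le)]
  rw [ENNReal.le_div_iff_mul_le (Or.inr hF0) (Or.inr hFtop)]
  calc r * (edist p.1 u + ENNReal.ofReal ρ * edist p.2 y₀) ≤ r * (F * r⁻¹) :=
        mul_le_mul_right hdenb r
    _ = F * (r * r⁻¹) := by ring
    _ = F := by rw [ENNReal.mul_inv_cancel hr0 hrtop, mul_one]
end

section
/- Let X and Y be metric spaces, F : X ⇒ Y a set-valued mapping, and (x̄,ȳ) ∈ gph F. Then sr[F](x̄,ȳ) ≤ \overline{|∇F|}^◇(x̄,ȳ), i.e. the metric subregularity modulus of F at (x̄,ȳ) is bounded above by the uniform strict slope of F at (x̄,ȳ). -/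
open Filter Metric Topology ENNReal

variable {X Y : Type*} [MetricSpace X] [MetricSpace Y]

/-- The nonlocal ρ-slope of a set-valued mapping `F` at `(x,y) ∈ gph F`:
`|∇F|^◇_ρ(x,y) := sup {[d(y,ȳ) − d(v,ȳ)]₊ / d_ρ((u,v),(x,y)) : (u,v) ∈ gph F, (u,v) ≠ (x,y)}`,
where `d_ρ((u,v),(x,y)) = max {d(u,x), ρ d(v,y)}`. -/
noncomputable def nlSlopeF (F : X → Set Y) (y₀ : Y) (ρ : ℝ) (p : X × Y) : ℝ≥0∞ :=
  ⨆ (q : X × Y) (_ : q.2 ∈ F q.1 ∧ q ≠ p),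
    ENNReal.ofReal (dist p.2 y₀ - dist q.2 y₀) /
      ENNReal.ofReal (max (dist q.1 p.1) (ρ * dist q.2 p.2))

/-- The uniform strict slope of `F` at `(x̄,ȳ)`:
`\overline{|∇F|}^◇(x̄,ȳ) := lim_{ρ↓0} inf {|∇F|^◇_ρ(x,y) : (x,y) ∈ gph F, x ∉ F⁻¹(ȳ),
d(x,x̄) < ρ, d(y,ȳ) < ρ}` (the limit being a supremum by monotonicity; `inf ∅ = +∞`). -/
noncomputable def uStrictSlopeF (F : X → Set Y) (x₀ : X) (y₀ : Y) : ℝ≥0∞ :=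
  ⨆ (ρ : ℝ) (_ : 0 < ρ),
    ⨅ (p : X × Y)
      (_ : p.2 ∈ F p.1 ∧ y₀ ∉ F p.1 ∧ dist p.1 x₀ < ρ ∧ dist p.2 y₀ < ρ),
        nlSlopeF F y₀ ρ p

/-- The metric subregularity modulus
`sr[F](x̄,ȳ) := liminf_{x→x̄, x∉F⁻¹(ȳ)} d(ȳ,F(x)) / d(x,F⁻¹(ȳ))`. -/
noncomputable def srMod (F : X → Set Y) (x₀ : X) (y₀ : Y) : ℝ≥0∞ :=
  ⨆ (δ : ℝ) (_ : 0 < δ),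
    ⨅ (x : X) (_ : dist x x₀ < δ ∧ y₀ ∉ F x),
      EMetric.infEdist y₀ (F x) / EMetric.infEdist x {x' | y₀ ∈ F x'}

/-- `sr[F](x̄,ȳ) ≤ \overline{|∇F|}^◇(x̄,ȳ)`. -/
theorem srMod_le_uStrictSlopeF (F : X → Set Y) (x₀ : X) (y₀ : Y)
    (hgph : y₀ ∈ F x₀) : srMod F x₀ y₀ ≤ uStrictSlopeF F x₀ y₀ := by
  rw [srMod]
  refine iSup₂_le fun δ hδ => le_of_forall_lt_imp_le_of_dense fun γ hγ => ?_
  rcases eq_or_ne γ 0 with rfl | hγ0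
  · exact zero_le
  have hγtop : γ ≠ ∞ := hγ.ne_top
  set g := γ.toReal with hgdef
  have hg : 0 < g := ENNReal.toReal_pos hγ0 hγtop
  set ρ := min δ (g + 1)⁻¹ with hρdef
  have hρ : 0 < ρ := lt_min hδ (by positivity)
  have hργ : γ * ENNReal.ofReal ρ ≤ 1 := by
    conv_lhs => rw [← ENNReal.ofReal_toReal hγtop]
    rw [← ENNReal.ofReal_mul hg.le]
    calc ENNReal.ofReal (g * ρ) ≤ ENNReal.ofReal (g * (g + 1)⁻¹) :=
          ENNReal.ofReal_le_ofReal
            (mul_le_mul_of_nonneg_left (min_le_right _ _) hg.le)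
      _ ≤ 1 := by
          rw [← ENNReal.ofReal_one]
          refine ENNReal.ofReal_le_ofReal ?_
          rw [← div_eq_mul_inv]
          exact div_le_one_of_le₀ (by linarith) (by positivity)
  refine le_iSup₂_of_le ρ hρ (le_iInf₂ fun p hp => ?_)
  obtain ⟨hpF, hpy, hpx, -⟩ := hp
  have hterm : γ < EMetric.infEdist y₀ (F p.1) / EMetric.infEdist p.1 {x' | y₀ ∈ F x'} :=
    hγ.trans_le (iInf₂_le p.1 ⟨hpx.trans_le (min_le_left _ _), hpy⟩)
  set a := EMetric.infEdist y₀ (F p.1) with hadef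
  set s := EMetric.infEdist p.1 {x' | y₀ ∈ F x'} with hsdef
  have hstop : s ≠ ∞ :=
    ne_top_of_le_ne_top (edist_ne_top _ _)
      (EMetric.infEdist_le_edist_of_mem (show x₀ ∈ {x' | y₀ ∈ F x'} from hgph))
  have h1 : γ * s < a := (ENNReal.lt_div_iff_mul_lt (Or.inr hγtop) (Or.inl hstop)).mp hterm
  have h2 : s < a / γ :=
    (ENNReal.lt_div_iff_mul_lt (Or.inl hγ0) (Or.inl hγtop)).mpr (by rwa [mul_comm] at h1)
  obtain ⟨u, huS, hu⟩ := EMetric.infEdist_lt_iff.mp h2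
  have hD0 : edist p.2 y₀ ≠ 0 := fun h => hpy (edist_eq_zero.mp h ▸ hpF)
  have hne : (u, y₀) ≠ p := by rintro rfl; exact hpy huS
  have haD : a ≤ edist p.2 y₀ := by
    rw [edist_comm]; exact EMetric.infEdist_le_edist_of_mem hpF
  rw [nlSlopeF]
  refine le_iSup₂_of_le (u, y₀) ⟨huS, hne⟩ ?_
  simp only [dist_self, sub_zero]
  have hγe : γ * edist u p.1 ≤ edist p.2 y₀ := by
    calc γ * edist u p.1 ≤ γ * (a / γ) := by
          refine mul_le_mul_right (le_of_lt ?_) γ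
          rwa [edist_comm]
      _ = a := ENNReal.mul_div_cancel hγ0 hγtop
      _ ≤ _ := haD
  have hγρD : γ * (ENNReal.ofReal ρ * edist y₀ p.2) ≤ edist p.2 y₀ := by
    rw [edist_comm y₀ p.2, ← mul_assoc]
    calc γ * ENNReal.ofReal ρ * edist p.2 y₀ ≤ 1 * edist p.2 y₀ :=
          mul_le_mul_left hργ _
      _ = _ := one_mul _
  rcases max_cases (dist u p.1) (ρ * dist y₀ p.2) with ⟨h, -⟩ | ⟨h, -⟩ <;> rw [h]
  · rw [← edist_dist, ← edist_dist]
    exact (ENNReal.le_div_iff_mul_le (Or.inr hD0) (Or.inr (edist_ne_top _ _))).mpr hγe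
  · rw [← edist_dist, ENNReal.ofReal_mul hρ.le, ← edist_dist]
    exact (ENNReal.le_div_iff_mul_le (Or.inr hD0) (Or.inr (edist_ne_top _ _))).mpr hγρD
end

section
/- Let X and Y be complete metric spaces, F : X ⇒ Y a set-valued mapping, and (x̄,ȳ) ∈ gph F. If gph F is locally closed (in the product topology) near (x̄,ȳ), then sr[F](x̄,ȳ) = \overline{|∇F|}^◇(x̄,ȳ). In particular, F is metrically subregular at (x̄,ȳ) if and only if \overline{|∇F|}^◇(x̄,ȳ) > 0. -/
open Filter Metric Topology ENNReal

variable {X Y : Type*} [MetricSpace X] [MetricSpace Y] [CompleteSpace X] [CompleteSpace Y]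

/-- `F` is metrically subregular at `(x̄,ȳ)`: for some `τ > 0` and some neighbourhood `U`
of `x̄`, `τ d(x,F⁻¹(ȳ)) ≤ d(ȳ,F(x))` for all `x ∈ U`. -/
def MetrSubreg (F : X → Set Y) (x₀ : X) (y₀ : Y) : Prop :=
  ∃ τ : ℝ, 0 < τ ∧ ∃ ε : ℝ, 0 < ε ∧ ∀ x : X, dist x x₀ < ε →
    ENNReal.ofReal τ * EMetric.infEdist x {x' | y₀ ∈ F x'} ≤ EMetric.infEdist y₀ (F x)

set_option linter.unusedSectionVars false
set_option maxHeartbeats 1000000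

private noncomputable def dR (ρ : ℝ) (p q : X × Y) : ℝ :=
  max (dist p.1 q.1) (ρ * dist p.2 q.2)

private lemma dR_nonneg {ρ : ℝ} (p q : X × Y) : 0 ≤ dR ρ p q :=
  le_max_of_le_left dist_nonneg

private lemma dR_self (ρ : ℝ) (p : X × Y) : dR ρ p p = 0 := by simp [dR]

private lemma dR_triangle {ρ : ℝ} (hρ : 0 ≤ ρ) (p q r : X × Y) :
    dR ρ p r ≤ dR ρ p q + dR ρ q r := by
  refine max_le (le_trans (dist_triangle p.1 q.1 r.1) ?_) ?_
  · exact add_le_add (le_max_left _ _) (le_max_left _ _)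
  · calc ρ * dist p.2 r.2 ≤ ρ * (dist p.2 q.2 + dist q.2 r.2) :=
        mul_le_mul_of_nonneg_left (dist_triangle _ _ _) hρ
      _ = ρ * dist p.2 q.2 + ρ * dist q.2 r.2 := by ring
      _ ≤ _ := add_le_add (le_max_right _ _) (le_max_right _ _)

private lemma dR_dist {ρ : ℝ} (hρ0 : 0 ≤ ρ) (hρ1 : ρ ≤ 1) (p q : X × Y) :
    ρ * dist p q ≤ dR ρ p q := by
  rw [Prod.dist_eq, mul_max_of_nonneg _ _ hρ0]
  exact max_le_max (by nlinarith [dist_nonneg (x := p.1) (y := q.1)]) le_rfl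

private lemma ekelandAux {ρ σ : ℝ} (hρ0 : 0 < ρ) (hρ1 : ρ ≤ 1) (hσ : 0 < σ)
    {G : Set (X × Y)} (hG : IsClosed G) (y₀ : Y) {p₀ : X × Y} (hp₀ : p₀ ∈ G) :
    ∃ p ∈ G, σ * dR ρ p p₀ + dist p.2 y₀ ≤ dist p₀.2 y₀ ∧
      ∀ q ∈ G, dist p.2 y₀ ≤ dist q.2 y₀ + σ * dR ρ q p := by
  set f : X × Y → ℝ := fun q => dist q.2 y₀ with hf
  have hf0 : ∀ q, 0 ≤ f q := fun q => dist_nonneg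
  have key : ∀ (n : ℕ) (p : X × Y), p ∈ G →
      ∃ q, (q ∈ G ∧ f q + σ * dR ρ q p ≤ f p) ∧
        ∀ q' ∈ G, f q' + σ * dR ρ q' p ≤ f p → f q ≤ f q' + (1/2)^n := by
    intro n p hp
    set s : Set ℝ := f '' {q | q ∈ G ∧ f q + σ * dR ρ q p ≤ f p} with hs
    have hne : s.Nonempty := ⟨f p, p, ⟨hp, by simp [dR_self]⟩, rfl⟩
    have hbdd : BddBelow s := ⟨0, by rintro r ⟨q, _, rfl⟩; exact hf0 q⟩
    obtain ⟨r, hrs, hrlt⟩ := Real.lt_sInf_add_pos hne (by positivity : (0:ℝ) < (1/2)^n)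
    obtain ⟨q, hqmem, rfl⟩ := hrs
    exact ⟨q, hqmem, fun q' hq' hle =>
      le_trans hrlt.le (add_le_add_left (csInf_le hbdd ⟨q', ⟨hq', hle⟩, rfl⟩) _)⟩
  choose st hst1 hst2 using key
  let seq : ℕ → {p : X × Y // p ∈ G} := fun n =>
    Nat.rec ⟨p₀, hp₀⟩ (fun n p => ⟨st n p.1 p.2, (hst1 n p.1 p.2).1⟩) n
  set p : ℕ → X × Y := fun n => (seq n).1 with hpdef
  have hpG : ∀ n, p n ∈ G := fun n => (seq n).2
  have hp0 : p 0 = p₀ := rfl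
  have hstep : ∀ n, f (p (n+1)) + σ * dR ρ (p (n+1)) (p n) ≤ f (p n) :=
    fun n => (hst1 n (p n) (hpG n)).2
  have hmin : ∀ n, ∀ q' ∈ G, f q' + σ * dR ρ q' (p n) ≤ f (p n) →
      f (p (n+1)) ≤ f q' + (1/2)^n := fun n => hst2 n (p n) (hpG n)
  have chain : ∀ n m, n ≤ m → f (p m) + σ * dR ρ (p m) (p n) ≤ f (p n) := by
    intro n m hnm
    induction m, hnm using Nat.le_induction with
    | base => simp [dR_self]
    | succ m hnm ih =>
      have h1 := hstep m
      have h2 := mul_le_mul_of_nonneg_left (dR_triangle hρ0.le (p (m+1)) (p m) (p n)) hσ.le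
      rw [mul_add] at h2
      linarith
  have fmono : ∀ n m, n ≤ m → f (p m) ≤ f (p n) := by
    intro n m h
    have h1 := chain n m h
    have h0 : 0 ≤ σ * dR ρ (p m) (p n) := mul_nonneg hσ.le (dR_nonneg _ _)
    linarith
  have hbdd : BddBelow (Set.range fun n => f (p n)) :=
    ⟨0, by rintro r ⟨n, rfl⟩; exact hf0 _⟩
  have hconv : Tendsto (fun n => f (p n)) atTop (𝓝 (⨅ n, f (p n))) :=
    tendsto_atTop_ciInf (fun a b hab => fmono a b hab) hbdd
  have hfc : CauchySeq (fun n => f (p n)) := hconv.cauchySeq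
  have hpc : CauchySeq p := by
    rw [Metric.cauchySeq_iff] at hfc ⊢
    intro ε hε
    obtain ⟨N, hN⟩ := hfc (σ * ρ * ε) (by positivity)
    refine ⟨N, fun m hm n hn => ?_⟩
    have key2 : ∀ a b, N ≤ a → N ≤ b → b ≤ a → dist (p a) (p b) < ε := by
      intro a b ha hb hba
      have h1 := chain b a hba
      have h2 := hN b hb a ha
      rw [Real.dist_eq] at h2
      have h3 : f (p b) - f (p a) < σ * ρ * ε := lt_of_le_of_lt (le_abs_self _) h2
      have h4 : ρ * dist (p a) (p b) ≤ dR ρ (p a) (p b) := dR_dist hρ0.le hρ1 _ _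
      have h5 : σ * (ρ * dist (p a) (p b)) ≤ σ * dR ρ (p a) (p b) :=
        mul_le_mul_of_nonneg_left h4 hσ.le
      have h6 : σ * ρ * dist (p a) (p b) < σ * ρ * ε := by nlinarith
      exact lt_of_mul_lt_mul_left h6 (by positivity)
    rcases le_total n m with h | h
    · exact key2 m n hm hn h
    · rw [dist_comm]; exact key2 n m hn hm h
  obtain ⟨phat, hptend⟩ := cauchySeq_tendsto_of_complete hpc
  have hphatG : phat ∈ G := hG.mem_of_tendsto hptend (Eventually.of_forall hpG)
  have chainInf : ∀ n, f phat + σ * dR ρ phat (p n) ≤ f (p n) := by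
    intro n
    have hcontf : Continuous fun q : X × Y => f q + σ * dR ρ q (p n) := by
      simp only [hf, dR]
      exact (continuous_snd.dist continuous_const).add (continuous_const.mul
        ((continuous_fst.dist continuous_const).max
          (continuous_const.mul (continuous_snd.dist continuous_const))))
    have hcont : Tendsto (fun m => f (p m) + σ * dR ρ (p m) (p n)) atTop
        (𝓝 (f phat + σ * dR ρ phat (p n))) := (hcontf.tendsto phat).comp hptend
    exact le_of_tendsto hcont (eventually_atTop.2 ⟨n, fun m hm => chain n m hm⟩)
  refine ⟨phat, hphatG, by have := chainInf 0; rw [hp0] at this; linarith, ?_⟩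
  intro q hq
  by_contra hcon
  push_neg at hcon
  have hkey : ∀ n : ℕ, f phat ≤ f q + (1/2)^n := by
    intro n
    have h1 : f q + σ * dR ρ q (p n) ≤ f (p n) := by
      have ht := mul_le_mul_of_nonneg_left (dR_triangle hρ0.le q phat (p n)) hσ.le
      rw [mul_add] at ht
      have h2 := chainInf n
      linarith
    have h2 := hmin n q hq h1
    have h3 : f phat ≤ f (p (n+1)) := by
      have := chainInf (n+1)
      have h0 : 0 ≤ σ * dR ρ phat (p (n+1)) := mul_nonneg hσ.le (dR_nonneg _ _)
      linarith
    linarith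
  have hlim : Tendsto (fun n : ℕ => f q + (1/2:ℝ)^n) atTop (𝓝 (f q)) := by
    have h := (tendsto_const_nhds (x := f q) (f := (atTop : Filter ℕ))).add
      (tendsto_pow_atTop_nhds_zero_of_lt_one (by norm_num : (0:ℝ) ≤ 1/2) (by norm_num))
    simpa using h
  have hfq : f phat ≤ f q := ge_of_tendsto hlim (Eventually.of_forall hkey)
  have h0 : 0 ≤ σ * dR ρ q phat := mul_nonneg hσ.le (dR_nonneg _ _)
  linarith

/-- if `X`, `Y` are complete and `gph F` is locally closed near
`(x̄,ȳ) ∈ gph F`, then `sr[F](x̄,ȳ) = \overline{|∇F|}^◇(x̄,ȳ)`; in particular, `F` is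
metrically subregular at `(x̄,ȳ)` iff `\overline{|∇F|}^◇(x̄,ȳ) > 0`. -/
theorem srMod_eq_uStrictSlopeF (F : X → Set Y) (x₀ : X) (y₀ : Y)
    (hgph : y₀ ∈ F x₀)
    (hclosed : ∃ U ∈ 𝓝 (x₀, y₀), IsClosed U ∧ IsClosed ({p : X × Y | p.2 ∈ F p.1} ∩ U)) :
    srMod F x₀ y₀ = uStrictSlopeF F x₀ y₀ ∧
      (MetrSubreg F x₀ y₀ ↔ 0 < uStrictSlopeF F x₀ y₀) := by
  obtain ⟨U, hU, -, hGU⟩ := hclosed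
  obtain ⟨R, hR0, hRU⟩ := (Metric.nhds_basis_closedBall.mem_iff).1 hU
  set S : Set X := {x' | y₀ ∈ F x'} with hSdef
  have hx₀S : x₀ ∈ S := hgph
  set G : Set (X × Y) := {p | p.2 ∈ F p.1} ∩ Metric.closedBall (x₀, y₀) R with hGdef
  have hGclosed : IsClosed G := by
    have hGeq : G = ({p : X × Y | p.2 ∈ F p.1} ∩ U) ∩ Metric.closedBall (x₀, y₀) R := by
      ext p
      constructor
      · rintro ⟨h1, h2⟩; exact ⟨⟨h1, hRU h2⟩, h2⟩
      · rintro ⟨⟨h1, -⟩, h2⟩; exact ⟨h1, h2⟩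
    rw [hGeq]
    exact hGU.inter Metric.isClosed_closedBall
  have hmemG : ∀ p : X × Y, p.2 ∈ F p.1 → dist p.1 x₀ ≤ R → dist p.2 y₀ ≤ R → p ∈ G := by
    intro p h1 h2 h3
    exact ⟨h1, by rw [Metric.mem_closedBall, Prod.dist_eq]; exact max_le h2 h3⟩
  -- positivity of numerator near x₀
  have hnumpos : ∀ x : X, dist x x₀ ≤ R → y₀ ∉ F x → 0 < EMetric.infEdist y₀ (F x) := by
    intro x hx hxf
    by_contra h
    push_neg at h
    have h0 : EMetric.infEdist y₀ (F x) = 0 := le_antisymm h (zero_le)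
    have hcl : y₀ ∈ closure (F x) := EMetric.mem_closure_iff_infEdist_zero.2 h0
    have hseq : ∀ n : ℕ, ∃ y ∈ F x, dist y₀ y < min R (1/(n+1)) := fun n =>
      Metric.mem_closure_iff.1 hcl _ (lt_min hR0 (by positivity))
    choose ys hys hdy using hseq
    have hmem : ∀ n, ((x, ys n) : X × Y) ∈ G := by
      intro n
      refine hmemG _ (hys n) hx ?_
      rw [dist_comm]
      exact le_trans (le_of_lt (hdy n)) (min_le_left _ _)
    have hytend : Tendsto ys atTop (𝓝 y₀) := by
      rw [Metric.tendsto_atTop]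
      intro ε hε
      obtain ⟨N, hN⟩ := exists_nat_one_div_lt hε
      refine ⟨N, fun n hn => ?_⟩
      have h1 : dist (ys n) y₀ < 1/(n+1) := by
        rw [dist_comm]; exact lt_of_lt_of_le (hdy n) (min_le_right _ _)
      have h2 : (1:ℝ)/(n+1) ≤ 1/(N+1) := by
        apply one_div_le_one_div_of_le (by positivity)
        exact_mod_cast add_le_add_left (Nat.cast_le.2 hn) 1
      calc dist (ys n) y₀ < 1/(n+1) := h1
        _ ≤ 1/(N+1) := h2
        _ < ε := hN
    have htend : Tendsto (fun n => ((x, ys n) : X × Y)) atTop (𝓝 (x, y₀)) :=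
      (tendsto_const_nhds (x := x)).prodMk_nhds hytend
    have : ((x, y₀) : X × Y) ∈ G := hGclosed.mem_of_tendsto htend (Eventually.of_forall hmem)
    exact hxf this.1
  have hden_fin : ∀ x : X, EMetric.infEdist x S ≠ ⊤ :=
    fun x => ne_top_of_le_ne_top (edist_ne_top x x₀) (EMetric.infEdist_le_edist_of_mem hx₀S)
  -- direction A ≤ B
  have hAB : srMod F x₀ y₀ ≤ uStrictSlopeF F x₀ y₀ := by
    refine le_of_forall_lt fun c hc => ?_
    rw [srMod, lt_iSup_iff] at hc
    obtain ⟨δ, hc⟩ := hc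
    rw [lt_iSup_iff] at hc
    obtain ⟨hδ0, hδ⟩ := hc
    obtain ⟨t, hct, htδ⟩ := exists_between hδ
    have htne : t ≠ ⊤ := (lt_of_lt_of_le htδ le_top).ne
    set τ := t.toReal with hτdef
    have ht0 : t ≠ 0 := (pos_of_gt hct).ne'
    have hτ0 : 0 < τ := ENNReal.toReal_pos ht0 htne
    have hτt : ENNReal.ofReal τ = t := ENNReal.ofReal_toReal htne
    set ρ := min δ (1/τ) with hρdef
    have hρ0 : 0 < ρ := lt_min hδ0 (by positivity)
    have hB : t ≤ uStrictSlopeF F x₀ y₀ := by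
      rw [uStrictSlopeF]
      refine le_iSup_of_le ρ (le_iSup_of_le hρ0 ?_)
      refine le_iInf fun p => le_iInf fun hp => ?_
      obtain ⟨hpF, hpy, hpx, hpyd⟩ := hp
      have hx : t < EMetric.infEdist y₀ (F p.1) / EMetric.infEdist p.1 S :=
        lt_of_lt_of_le htδ (iInf₂_le p.1 ⟨lt_of_lt_of_le hpx (min_le_left _ _), hpy⟩)
      set d := dist p.2 y₀ with hddef
      have hd0 : 0 < d := dist_pos.2 (fun h => hpy (h ▸ hpF))
      have hnum : EMetric.infEdist y₀ (F p.1) ≤ ENNReal.ofReal d := by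
        have := EMetric.infEdist_le_edist_of_mem (x := y₀) hpF
        rwa [edist_dist, dist_comm] at this
      -- t * den < ofReal d
      have h1 : t * EMetric.infEdist p.1 S < ENNReal.ofReal d :=
        lt_of_lt_of_le (ENNReal.mul_lt_of_lt_div hx) hnum
      have h2 : EMetric.infEdist p.1 S < ENNReal.ofReal (d / τ) := by
        rw [ENNReal.ofReal_div_of_pos hτ0, hτt]
        rw [ENNReal.lt_div_iff_mul_lt (Or.inl ht0) (Or.inl htne)]
        rwa [mul_comm]
      obtain ⟨u, huS, hud⟩ := EMetric.infEdist_lt_iff.1 h2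
      have hud' : dist p.1 u < d / τ := by
        rw [edist_dist] at hud
        exact (ENNReal.ofReal_lt_ofReal_iff (by positivity)).1 hud
      have hqne : ((u, y₀) : X × Y) ≠ p := by
        intro h
        have h2 : y₀ = p.2 := congrArg Prod.snd h
        apply hd0.ne'
        rw [hddef, ← h2, dist_self]
      have hmax : max (dist u p.1) (ρ * dist y₀ p.2) ≤ d / τ := by
        refine max_le ?_ ?_
        · rw [dist_comm]; exact hud'.le
        · have h3 : ρ * dist y₀ p.2 ≤ (1/τ) * d := by
            rw [dist_comm]
            exact mul_le_mul (min_le_right _ _) le_rfl dist_nonneg (by positivity)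
          linarith [h3, (by ring : (1/τ) * d = d / τ)]
      have hmax0 : 0 < max (dist u p.1) (ρ * dist y₀ p.2) :=
        lt_max_of_lt_right (mul_pos hρ0 (by rw [dist_comm]; exact hd0))
      calc t = ENNReal.ofReal τ := hτt.symm
        _ ≤ ENNReal.ofReal (dist p.2 y₀ - dist ((u, y₀) : X × Y).2 y₀) /
              ENNReal.ofReal (max (dist ((u, y₀) : X × Y).1 p.1)
                (ρ * dist ((u, y₀) : X × Y).2 p.2)) := by
            simp only [dist_self]
            rw [sub_zero]
            rw [ENNReal.le_div_iff_mul_le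
              (Or.inl (ENNReal.ofReal_pos.2 hmax0).ne')
              (Or.inl ENNReal.ofReal_ne_top)]
            rw [← ENNReal.ofReal_mul hτ0.le]
            apply ENNReal.ofReal_le_ofReal
            calc τ * max (dist u p.1) (ρ * dist y₀ p.2) ≤ τ * (d / τ) :=
                mul_le_mul_of_nonneg_left hmax hτ0.le
              _ = d := by field_simp
        _ ≤ nlSlopeF F y₀ ρ p := le_iSup₂_of_le ((u, y₀) : X × Y) ⟨huS, hqne⟩ le_rfl
    exact lt_of_lt_of_le hct hB
  -- direction B ≤ A
  have hBA : uStrictSlopeF F x₀ y₀ ≤ srMod F x₀ y₀ := by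
    refine le_of_forall_lt fun c hc => ?_
    rw [uStrictSlopeF, lt_iSup_iff] at hc
    obtain ⟨ρ₁, hc⟩ := hc
    rw [lt_iSup_iff] at hc
    obtain ⟨hρ₁0, hρ₁⟩ := hc
    obtain ⟨t, hct, ht₁⟩ := exists_between hρ₁
    have htne : t ≠ ⊤ := (lt_of_lt_of_le ht₁ le_top).ne
    have ht0 : t ≠ 0 := (pos_of_gt hct).ne'
    set σ := t.toReal with hσdef
    have hσ0 : 0 < σ := ENNReal.toReal_pos ht0 htne
    have hσt : ENNReal.ofReal σ = t := ENNReal.ofReal_toReal htne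
    set ρ := min (min ρ₁ 1) (min (R/2) (σ * R / 2)) with hρdef
    have hρ0 : 0 < ρ := lt_min (lt_min hρ₁0 one_pos) (lt_min (by positivity) (by positivity))
    have hρρ₁ : ρ ≤ ρ₁ := le_trans (min_le_left _ _) (min_le_left _ _)
    have hρ1 : ρ ≤ 1 := le_trans (min_le_left _ _) (min_le_right _ _)
    have hρR : ρ ≤ R/2 := le_trans (min_le_right _ _) (min_le_left _ _)
    have hρσR : ρ ≤ σ * R / 2 := le_trans (min_le_right _ _) (min_le_right _ _)
    have hIρ : ∀ p : X × Y,
        p.2 ∈ F p.1 → y₀ ∉ F p.1 → dist p.1 x₀ < ρ → dist p.2 y₀ < ρ →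
        t < nlSlopeF F y₀ ρ p := by
      intro p h1 h2 h3 h4
      have hfeas : t < nlSlopeF F y₀ ρ₁ p :=
        lt_of_lt_of_le ht₁ (iInf₂_le p ⟨h1, h2, lt_of_lt_of_le h3 hρρ₁, lt_of_lt_of_le h4 hρρ₁⟩)
      refine lt_of_lt_of_le hfeas ?_
      rw [nlSlopeF, nlSlopeF]
      refine iSup_mono fun q => iSup_mono' fun hq => ⟨hq, ?_⟩
      exact ENNReal.div_le_div_left (ENNReal.ofReal_le_ofReal
        (max_le_max le_rfl (mul_le_mul_of_nonneg_right hρρ₁ dist_nonneg))) _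
    set δ := min (R/2) (min (ρ/8) (ρ/(2*σ))) with hδdef
    have hδ0 : 0 < δ := lt_min (by positivity) (lt_min (by positivity) (by positivity))
    have hδR : δ ≤ R/2 := min_le_left _ _
    have hδρ8 : δ ≤ ρ/8 := le_trans (min_le_right _ _) (min_le_left _ _)
    have hδρσ : δ ≤ ρ/(2*σ) := le_trans (min_le_right _ _) (min_le_right _ _)
    have main : ∀ x : X, dist x x₀ < δ ∧ y₀ ∉ F x →
        ENNReal.ofReal σ ≤ EMetric.infEdist y₀ (F x) / EMetric.infEdist x S := by
      rintro x ⟨hxδ, hxF⟩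
      have hxR : dist x x₀ ≤ R := le_trans hxδ.le (le_trans hδR (by linarith))
      have hnum0 : 0 < EMetric.infEdist y₀ (F x) := hnumpos x hxR hxF
      rcases eq_or_ne (EMetric.infEdist x S) 0 with hd0 | hd0
      · rw [hd0, ENNReal.div_zero hnum0.ne']; exact le_top
      rw [ENNReal.le_div_iff_mul_le (Or.inl hd0) (Or.inl (hden_fin x))]
      by_contra hcon
      push_neg at hcon
      -- real-number data
      set der := (EMetric.infEdist x S).toReal with hderdef
      have hder_eq : EMetric.infEdist x S = ENNReal.ofReal der :=
        (ENNReal.ofReal_toReal (hden_fin x)).symm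
      have hder_pos : 0 < der := ENNReal.toReal_pos hd0 (hden_fin x)
      have hden_lt : EMetric.infEdist x S < ENNReal.ofReal δ := by
        refine lt_of_le_of_lt (EMetric.infEdist_le_edist_of_mem hx₀S) ?_
        rw [edist_dist]
        exact (ENNReal.ofReal_lt_ofReal_iff hδ0).2 hxδ
      have hder_lt : der < δ := by
        rw [hder_eq] at hden_lt
        exact (ENNReal.ofReal_lt_ofReal_iff_of_nonneg (le_of_lt hder_pos)).1 hden_lt
      have hnum_lt : EMetric.infEdist y₀ (F x) < ENNReal.ofReal (σ * der) := by
        refine lt_of_lt_of_le hcon (le_of_eq ?_)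
        rw [hder_eq, ← ENNReal.ofReal_mul hσ0.le]
      have hnum_ne : EMetric.infEdist y₀ (F x) ≠ ⊤ := ne_top_of_lt hnum_lt
      set r := (EMetric.infEdist y₀ (F x)).toReal with hrdef
      have hr_eq : EMetric.infEdist y₀ (F x) = ENNReal.ofReal r :=
        (ENNReal.ofReal_toReal hnum_ne).symm
      have hr0 : 0 < r := ENNReal.toReal_pos hnum0.ne' hnum_ne
      have hrlt : r < σ * der := by
        rw [hr_eq] at hnum_lt
        exact (ENNReal.ofReal_lt_ofReal_iff_of_nonneg hr0.le).1 hnum_lt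
      have hrδ : r < σ * δ := by nlinarith
      set ε := min ((σ * der - r)/2) (min (ρ/2) (σ*ρ/2)) with hεdef
      have hε0 : 0 < ε := lt_min (by nlinarith) (lt_min (by positivity) (by positivity))
      have hε1 : ε ≤ (σ * der - r)/2 := min_le_left _ _
      have hε2 : ε ≤ ρ/2 := le_trans (min_le_right _ _) (min_le_left _ _)
      have hε3 : ε ≤ σ*ρ/2 := le_trans (min_le_right _ _) (min_le_right _ _)
      -- pick y
      have hnlt : EMetric.infEdist y₀ (F x) < ENNReal.ofReal (r + ε) := by
        rw [hr_eq]
        exact (ENNReal.ofReal_lt_ofReal_iff_of_nonneg hr0.le).2 (by linarith)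
      obtain ⟨y, hyF, hyd⟩ := EMetric.infEdist_lt_iff.1 hnlt
      have hyd' : dist y₀ y < r + ε := by
        rw [edist_dist] at hyd
        exact (ENNReal.ofReal_lt_ofReal_iff (by positivity)).1 hyd
      have hσδ : σ * δ ≤ ρ/2 := by
        calc σ * δ ≤ σ * (ρ/(2*σ)) := mul_le_mul_of_nonneg_left hδρσ hσ0.le
          _ = ρ/2 := by
              rw [mul_comm, div_mul_eq_mul_div, mul_comm (2:ℝ) σ, ← div_div,
                mul_div_assoc, div_self hσ0.ne', mul_one]
      have hrε : r + ε < ρ := by linarith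
      have hp₀G : ((x, y) : X × Y) ∈ G := by
        refine hmemG _ hyF hxR ?_
        have : dist y y₀ < ρ := by rw [dist_comm]; linarith
        linarith
      obtain ⟨phat, hphatG, hEk1, hEk2⟩ := ekelandAux hρ0 hρ1 hσ0 hGclosed y₀ hp₀G
      have hEk1' : σ * dR ρ phat (x, y) + dist phat.2 y₀ ≤ dist y y₀ := hEk1
      have hfp0 : dist y y₀ < r + ε := by rw [dist_comm]; exact hyd'
      have hdR0 : 0 ≤ dR ρ phat (x, y) := dR_nonneg _ _
      have hfphat : dist phat.2 y₀ < r + ε := by nlinarith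
      have hdRle : dR ρ phat (x, y) ≤ (r + ε)/σ := by
        rw [le_div_iff₀ hσ0]
        have := dist_nonneg (x := phat.2) (y := y₀)
        nlinarith
      have hd1 : dist phat.1 x ≤ (r + ε)/σ := le_trans (le_max_left _ _) hdRle
      have hres : (r + ε)/σ < der := by
        rw [div_lt_iff₀ hσ0]
        nlinarith
      have hyN : y₀ ∉ F phat.1 := by
        intro hmem
        have h4 : EMetric.infEdist x S ≤ edist x phat.1 :=
          EMetric.infEdist_le_edist_of_mem hmem
        rw [hder_eq, edist_dist] at h4
        have h5 : der ≤ dist x phat.1 := (ENNReal.ofReal_le_ofReal_iff dist_nonneg).1 h4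
        rw [dist_comm] at h5
        linarith [le_trans h5 hd1]
      have h8 : (r + ε)/σ ≤ δ + ρ/2 := by
        rw [div_le_iff₀ hσ0]
        nlinarith
      have hphx : dist phat.1 x₀ < ρ := by
        have h6 : dist phat.1 x₀ ≤ dist phat.1 x + dist x x₀ := dist_triangle _ _ _
        linarith
      have hphy : dist phat.2 y₀ < ρ := lt_trans hfphat hrε
      have hT := hIρ phat hphatG.1 hyN hphx hphy
      have hUB : nlSlopeF F y₀ ρ phat ≤ t := by
        rw [nlSlopeF]
        refine iSup₂_le fun q hq => ?_
        obtain ⟨hqF, hqne⟩ := hq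
        rcases le_or_gt (dist phat.2 y₀ - dist q.2 y₀) 0 with ha | ha
        · rw [ENNReal.ofReal_eq_zero.2 ha, ENNReal.zero_div]
          exact zero_le
        rw [← hσt]
        have hqd2 : dist q.2 y₀ < ρ := by linarith
        by_cases hqG : q ∈ Metric.closedBall ((x₀ : X), y₀) R
        · have hek := hEk2 q ⟨hqF, hqG⟩
          apply ENNReal.div_le_of_le_mul
          rw [← ENNReal.ofReal_mul hσ0.le]
          apply ENNReal.ofReal_le_ofReal
          have hdreq : dR ρ q phat = max (dist q.1 phat.1) (ρ * dist q.2 phat.2) := rfl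
          rw [hdreq] at hek
          linarith
        · have hf1 : R < dist q.1 x₀ := by
            rw [Metric.mem_closedBall, Prod.dist_eq] at hqG
            push_neg at hqG
            rcases lt_max_iff.1 hqG with h | h
            · exact h
            · exfalso; linarith
          have hD : R/2 ≤ max (dist q.1 phat.1) (ρ * dist q.2 phat.2) := by
            refine le_max_of_le_left ?_
            have h9 : dist q.1 x₀ ≤ dist q.1 phat.1 + dist phat.1 x₀ := dist_triangle _ _ _
            linarith
          have ha' : dist phat.2 y₀ - dist q.2 y₀ ≤ ρ :=
            le_trans (by linarith [dist_nonneg (x := q.2) (y := y₀)]) hphy.le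
          calc ENNReal.ofReal (dist phat.2 y₀ - dist q.2 y₀) /
                ENNReal.ofReal (max (dist q.1 phat.1) (ρ * dist q.2 phat.2))
              ≤ ENNReal.ofReal ρ / ENNReal.ofReal (R/2) :=
                ENNReal.div_le_div (ENNReal.ofReal_le_ofReal ha')
                  (ENNReal.ofReal_le_ofReal hD)
            _ = ENNReal.ofReal (ρ / (R/2)) := (ENNReal.ofReal_div_of_pos (by positivity)).symm
            _ ≤ ENNReal.ofReal σ := by
                apply ENNReal.ofReal_le_ofReal
                rw [div_le_iff₀ (by positivity)]
                nlinarith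
      exact absurd (lt_of_lt_of_le hT hUB) (lt_irrefl t)
    have hfinal : t ≤ srMod F x₀ y₀ := by
      rw [srMod]
      refine le_iSup_of_le δ (le_iSup_of_le hδ0 (le_iInf fun x => le_iInf fun hx => ?_))
      rw [← hσt]
      exact main x hx
    exact lt_of_lt_of_le hct hfinal
  have hEq : srMod F x₀ y₀ = uStrictSlopeF F x₀ y₀ := le_antisymm hAB hBA
  refine ⟨hEq, ?_⟩
  rw [← hEq]
  constructor
  · rintro ⟨τ, hτ0, ε, hε0, hτ⟩
    have hδ0 : 0 < min ε R := lt_min hε0 hR0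
    have hle : ENNReal.ofReal τ ≤ srMod F x₀ y₀ := by
      rw [srMod]
      refine le_iSup_of_le (min ε R) (le_iSup_of_le hδ0 (le_iInf fun x => le_iInf fun hx => ?_))
      have hnum : 0 < EMetric.infEdist y₀ (F x) :=
        hnumpos x (le_trans hx.1.le (min_le_right _ _)) hx.2
      rcases eq_or_ne (EMetric.infEdist x S) 0 with hd0 | hd0
      · rw [hd0, ENNReal.div_zero hnum.ne']
        exact le_top
      · rw [ENNReal.le_div_iff_mul_le (Or.inl hd0) (Or.inl (hden_fin x))]
        exact hτ x (lt_of_lt_of_le hx.1 (min_le_left _ _))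
    exact lt_of_lt_of_le (ENNReal.ofReal_pos.2 hτ0) hle
  · intro hpos
    rw [srMod, lt_iSup_iff] at hpos
    obtain ⟨δ, hpos⟩ := hpos
    rw [lt_iSup_iff] at hpos
    obtain ⟨hδ0, hb⟩ := hpos
    set b := ⨅ (x : X) (_ : dist x x₀ < δ ∧ y₀ ∉ F x),
      EMetric.infEdist y₀ (F x) / EMetric.infEdist x S with hbdef
    have hb1 : 0 < min 1 b := lt_min one_pos hb
    have hbt : min 1 b ≠ ⊤ := ne_top_of_le_ne_top one_ne_top (min_le_left _ _)
    refine ⟨(min 1 b).toReal, ENNReal.toReal_pos hb1.ne' hbt, δ, hδ0, fun x hx => ?_⟩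
    rw [ENNReal.ofReal_toReal hbt]
    by_cases hxF : y₀ ∈ F x
    · have : EMetric.infEdist x S = 0 := EMetric.infEdist_zero_of_mem hxF
      rw [this, mul_zero]; exact zero_le
    · have hle : min 1 b ≤ EMetric.infEdist y₀ (F x) / EMetric.infEdist x S :=
        le_trans (min_le_right _ _) (iInf₂_le x ⟨hx, hxF⟩)
      rcases eq_or_ne (EMetric.infEdist x S) 0 with hd0 | hd0
      · rw [hd0, mul_zero]; exact zero_le
      · exact (ENNReal.le_div_iff_mul_le (Or.inl hd0) (Or.inl (hden_fin x))).1 hle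
end
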